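/- arXiv:2009.02484 — 4 statements merged into one kernel-verified Lean document; each statement's English description precedes it below -/
import Mathlib

section
/- For all t ∈ [0,T] it holds that sup_{x ∈ O} (|u(t,x)|/V(t,x)) ≤ [sup_{x ∈ O} (|g(x)|/V(T,x)) + sup_{x ∈ O} sup_{s ∈ [t,T]} (|T f(s,x,0)|/V(s,x))] · e^{L(T−t)}. -/
open MeasureTheory ENNReal

private lemma sumExpTendsto (y : ℝ) :
    Filter.Tendsto (fun n => ∑ k ∈ Finset.range n, y ^ k / (Nat.factorial k : ℝ))
      Filter.atTop (nhds (Real.exp y)) := by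
  have h := (Real.summable_pow_div_factorial y).hasSum.tendsto_sum_nat
  have h2 : Real.exp y = ∑' n : ℕ, y ^ n / (Nat.factorial n : ℝ) := by
    rw [Real.exp_eq_exp_ℝ]
    exact congrFun (NormedSpace.exp_eq_tsum_div (𝔸 := ℝ)) y
  rw [h2]; exact h

private lemma intPow (L T s : ℝ) (k : ℕ) :
    ∫ r in s..T, (L * (T - r)) ^ k = L ^ k * (T - s) ^ (k + 1) / (k + 1) := by
  have h := intervalIntegral.integral_comp_sub_left (a := s) (b := T)
    (fun x => (L * x) ^ k) T
  simp only [sub_self] at h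
  rw [show (fun r => (L * (T - r)) ^ k) = fun r => (fun x => (L * x) ^ k) (T - r) from rfl]
  rw [h]
  simp_rw [mul_pow]
  rw [intervalIntegral.integral_const_mul, integral_pow]
  rw [zero_pow (Nat.succ_ne_zero k)]
  push_cast
  ring

noncomputable section

/-- `ℝ^d` realized as functions `Fin d → ℝ`. -/
abbrev Vec (d : ℕ) := Fin d → ℝ

/-- Proposition `b01`, item (ii).
Under the stated assumptions, if the measurable function `u : [0,T] × O → ℝ`
satisfies the finiteness condition and the stochastic fixed point equation
`u(t,x) = E[g(X^x_{t,T})] + ∫_t^T E[f(s,X^x_{t,s},u(s,X^x_{t,s}))] ds`, then for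
all `t ∈ [0,T]` it holds that
`sup_{x∈O} |u(t,x)|/V(t,x)
  ≤ [sup_{x∈O} |g(x)|/V(T,x) + sup_{x∈O} sup_{s∈[t,T]} |T f(s,x,0)|/V(s,x)] e^{L(T-t)}`. -/
theorem stmt_1
    (d : ℕ) (L T c : ℝ) (hL : 0 ≤ L) (hT : 0 ≤ T) (hc : 0 ≤ c)
    (O : Set (Vec d)) (hO : MeasurableSet O) (hOne : O.Nonempty)
    (Ω : Type) [MeasurableSpace Ω] (P : Measure Ω) [IsProbabilityMeasure P]
    (X : ℝ → ℝ → Vec d → Ω → Vec d)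
    (hXO : ∀ t ∈ Set.Icc (0 : ℝ) T, ∀ s ∈ Set.Icc t T, ∀ x ∈ O, ∀ ω, X t s x ω ∈ O)
    (hXψ : ∀ ψ : ℝ → Vec d → ℝ≥0∞, Measurable (Function.uncurry ψ) →
      Measurable fun q : {p : (ℝ × ℝ) × Vec d //
          p.1.1 ∈ Set.Icc 0 T ∧ p.1.2 ∈ Set.Icc p.1.1 T ∧ p.2 ∈ O} =>
        ∫⁻ ω, ψ q.1.1.2 (X q.1.1.1 q.1.1.2 q.1.2 ω) ∂P)
    (f : ℝ → Vec d → ℝ → ℝ) (g : Vec d → ℝ) (V : ℝ → Vec d → ℝ)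
    (hf : Measurable fun q : {p : (ℝ × Vec d) × ℝ // p.1.1 ∈ Set.Icc 0 T ∧ p.1.2 ∈ O} =>
      f q.1.1.1 q.1.1.2 q.1.2)
    (hg : Measurable fun x : O => g x.1)
    (hV : Measurable fun q : {p : ℝ × Vec d // p.1 ∈ Set.Icc 0 T ∧ p.2 ∈ O} => V q.1.1 q.1.2)
    (hVpos : ∀ t ∈ Set.Icc (0 : ℝ) T, ∀ x ∈ O, 0 < V t x)
    (hf0 : ∀ t ∈ Set.Icc (0 : ℝ) T, ∀ x ∈ O, |f t x 0| ≤ c * V t x)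
    (hgV : ∀ x ∈ O, |g x| ≤ c * V T x)
    (hVX : ∀ t ∈ Set.Icc (0 : ℝ) T, ∀ s ∈ Set.Icc t T, ∀ x ∈ O,
      (∫⁻ ω, ENNReal.ofReal (V s (X t s x ω)) ∂P) ≤ ENNReal.ofReal (V t x))
    (hfLip : ∀ t ∈ Set.Icc (0 : ℝ) T, ∀ x ∈ O, ∀ v w : ℝ,
      |f t x v - f t x w| ≤ L * |v - w|)
    -- the given measurable solution `u`
    (u : ℝ → Vec d → ℝ)
    (humeas : Measurable fun q : {p : ℝ × Vec d // p.1 ∈ Set.Icc 0 T ∧ p.2 ∈ O} =>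
      u q.1.1 q.1.2)
    (hufin : ∀ t ∈ Set.Icc (0 : ℝ) T, ∀ x ∈ O,
      (∫⁻ ω, ENNReal.ofReal |g (X t T x ω)| ∂P)
          + (∫⁻ s in Set.Icc t T, ∫⁻ ω, ENNReal.ofReal |f s (X t s x ω) (u s (X t s x ω))| ∂P)
          + (⨆ (y : O) (s : Set.Icc (0 : ℝ) T), ENNReal.ofReal (|u s.1 y.1| / V s.1 y.1))
        < ⊤)
    (hueq : ∀ t ∈ Set.Icc (0 : ℝ) T, ∀ x ∈ O,
      u t x = (∫ ω, g (X t T x ω) ∂P)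
        + ∫ s in Set.Icc t T, (∫ ω, f s (X t s x ω) (u s (X t s x ω)) ∂P)) :
    ∀ t ∈ Set.Icc (0 : ℝ) T,
      (⨆ x : O, ENNReal.ofReal (|u t x.1| / V t x.1))
        ≤ ((⨆ x : O, ENNReal.ofReal (|g x.1| / V T x.1))
            + ⨆ (x : O) (s : Set.Icc t T), ENNReal.ofReal (|T * f s.1 x.1 0| / V s.1 x.1))
          * ENNReal.ofReal (Real.exp (L * (T - t))) := by
  intro t ht
  -- the three suprema as real constants
  set Sg : ℝ≥0∞ := ⨆ x : O, ENNReal.ofReal (|g x.1| / V T x.1) with hSgdef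
  set SB : ℝ≥0∞ := ⨆ (x : O) (s : Set.Icc t T), ENNReal.ofReal (|T * f s.1 x.1 0| / V s.1 x.1)
    with hSBdef
  set SC : ℝ≥0∞ := ⨆ (y : O) (s : Set.Icc (0 : ℝ) T), ENNReal.ofReal (|u s.1 y.1| / V s.1 y.1)
    with hSCdef
  have hTmem : T ∈ Set.Icc (0 : ℝ) T := ⟨hT, le_rfl⟩
  have hSg_ne : Sg ≠ ⊤ := by
    refine ne_top_of_le_ne_top (ofReal_ne_top (r := c)) (iSup_le fun x => ?_)
    exact ofReal_le_ofReal ((div_le_iff₀ (hVpos T hTmem x.1 x.2)).mpr (hgV x.1 x.2))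
  have hSB_ne : SB ≠ ⊤ := by
    refine ne_top_of_le_ne_top (ofReal_ne_top (r := T * c)) (iSup_le fun x => iSup_le fun s => ?_)
    have hs0T : s.1 ∈ Set.Icc (0 : ℝ) T := ⟨ht.1.trans s.2.1, s.2.2⟩
    refine ofReal_le_ofReal ((div_le_iff₀ (hVpos s.1 hs0T x.1 x.2)).mpr ?_)
    rw [abs_mul, abs_of_nonneg hT, mul_assoc]
    exact mul_le_mul_of_nonneg_left (hf0 s.1 hs0T x.1 x.2) hT
  have hSC_ne : SC ≠ ⊤ := by
    obtain ⟨x0, hx0⟩ := hOne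
    have h := hufin 0 ⟨le_rfl, hT⟩ x0 hx0
    exact (lt_of_le_of_lt le_add_self h).ne
  set A : ℝ := Sg.toReal with hAdef
  set B : ℝ := SB.toReal with hBdef
  set C : ℝ := SC.toReal with hCdef
  have hA0 : 0 ≤ A := ENNReal.toReal_nonneg
  have hB0 : 0 ≤ B := ENNReal.toReal_nonneg
  have hC0 : 0 ≤ C := ENNReal.toReal_nonneg
  -- pointwise bounds coming from the suprema
  have hAb : ∀ x ∈ O, |g x| ≤ A * V T x := by
    intro x hx
    have h1 : ENNReal.ofReal (|g x| / V T x) ≤ Sg :=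
      le_iSup (fun y : O => ENNReal.ofReal (|g y.1| / V T y.1)) ⟨x, hx⟩
    have h2 := ENNReal.toReal_mono hSg_ne h1
    rw [ENNReal.toReal_ofReal (div_nonneg (abs_nonneg _) (hVpos T hTmem x hx).le)] at h2
    exact (div_le_iff₀ (hVpos T hTmem x hx)).mp h2
  have hBb : ∀ s ∈ Set.Icc t T, ∀ x ∈ O, T * |f s x 0| ≤ B * V s x := by
    intro s hs x hx
    have hs0T : s ∈ Set.Icc (0 : ℝ) T := ⟨ht.1.trans hs.1, hs.2⟩
    have h1 : ENNReal.ofReal (|T * f s x 0| / V s x) ≤ SB := by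
      refine le_iSup_of_le (i := ⟨x, hx⟩) ?_
      exact le_iSup (fun r : Set.Icc t T => ENNReal.ofReal (|T * f r.1 x 0| / V r.1 x)) ⟨s, hs⟩
    have h2 := ENNReal.toReal_mono hSB_ne h1
    rw [ENNReal.toReal_ofReal (div_nonneg (abs_nonneg _) (hVpos s hs0T x hx).le)] at h2
    have h3 := (div_le_iff₀ (hVpos s hs0T x hx)).mp h2
    rwa [abs_mul, abs_of_nonneg hT] at h3
  have hCb : ∀ s ∈ Set.Icc (0 : ℝ) T, ∀ x ∈ O, |u s x| ≤ C * V s x := by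
    intro s hs x hx
    have h1 : ENNReal.ofReal (|u s x| / V s x) ≤ SC := by
      refine le_iSup_of_le (i := ⟨x, hx⟩) ?_
      exact le_iSup (fun r : Set.Icc (0 : ℝ) T => ENNReal.ofReal (|u r.1 x| / V r.1 x)) ⟨s, hs⟩
    have h2 := ENNReal.toReal_mono hSC_ne h1
    rw [ENNReal.toReal_ofReal (div_nonneg (abs_nonneg _) (hVpos s hs x hx).le)] at h2
    exact (div_le_iff₀ (hVpos s hs x hx)).mp h2
  -- the comparison functions
  set φ : ℕ → ℝ → ℝ := fun n r =>
    (A + B) * ∑ k ∈ Finset.range n, (L * (T - r)) ^ k / (Nat.factorial k : ℝ)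
      + C * ((L * (T - r)) ^ n / (Nat.factorial n : ℝ)) with hφdef
  have hφ0 : ∀ n : ℕ, ∀ r : ℝ, r ≤ T → 0 ≤ φ n r := by
    intro n r hr
    have h1 : 0 ≤ L * (T - r) := mul_nonneg hL (by linarith)
    refine add_nonneg (mul_nonneg (add_nonneg hA0 hB0) (Finset.sum_nonneg fun k _ =>
      div_nonneg (pow_nonneg h1 k) (Nat.cast_nonneg _))) (mul_nonneg hC0
      (div_nonneg (pow_nonneg h1 n) (Nat.cast_nonneg _)))
  have hφcont : ∀ n : ℕ, Continuous (φ n) := by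
    intro n
    simp only [hφdef]
    fun_prop
  -- main induction
  have key : ∀ n : ℕ, ∀ s ∈ Set.Icc t T, ∀ x ∈ O, |u s x| ≤ φ n s * V s x := by
    intro n
    induction n with
    | zero =>
      intro s hs x hx
      have h := hCb s ⟨ht.1.trans hs.1, hs.2⟩ x hx
      simpa [hφdef] using h
    | succ n ih =>
      intro s hs x hx
      have hs0 : s ∈ Set.Icc (0 : ℝ) T := ⟨ht.1.trans hs.1, hs.2⟩
      have hVs := hVpos s hs0 x hx
      -- estimate on the g-term
      have hE1 : |∫ ω, g (X s T x ω) ∂P| ≤ A * V s x := by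
        have hlin : (∫⁻ ω, ENNReal.ofReal |g (X s T x ω)| ∂P) ≤ ENNReal.ofReal (A * V s x) := by
          calc (∫⁻ ω, ENNReal.ofReal |g (X s T x ω)| ∂P)
              ≤ ∫⁻ ω, ENNReal.ofReal A * ENNReal.ofReal (V T (X s T x ω)) ∂P := by
                refine lintegral_mono fun ω => ?_
                rw [← ENNReal.ofReal_mul hA0]
                exact ofReal_le_ofReal (hAb _ (hXO s hs0 T ⟨hs.2, le_rfl⟩ x hx ω))
            _ = ENNReal.ofReal A * ∫⁻ ω, ENNReal.ofReal (V T (X s T x ω)) ∂P :=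
                lintegral_const_mul' _ _ ofReal_ne_top
            _ ≤ ENNReal.ofReal A * ENNReal.ofReal (V s x) :=
                mul_le_mul_right (hVX s hs0 T ⟨hs.2, le_rfl⟩ x hx) _
            _ = ENNReal.ofReal (A * V s x) := (ENNReal.ofReal_mul hA0).symm
        calc |∫ ω, g (X s T x ω) ∂P|
            ≤ (∫⁻ ω, ENNReal.ofReal |g (X s T x ω)| ∂P).toReal := by
              simpa [Real.norm_eq_abs] using
                norm_integral_le_lintegral_norm (μ := P) (fun ω => g (X s T x ω))
          _ ≤ (ENNReal.ofReal (A * V s x)).toReal := ENNReal.toReal_mono ofReal_ne_top hlin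
          _ = A * V s x := ENNReal.toReal_ofReal (mul_nonneg hA0 hVs.le)
      by_cases hT0 : T = 0
      · -- degenerate case T = 0
        have hs00 : s = 0 := le_antisymm (hT0 ▸ hs0.2) hs0.1
        have hrest : (volume : Measure ℝ).restrict (Set.Icc s T) = 0 := by
          rw [Measure.restrict_eq_zero, Real.volume_Icc]
          simp [hs00, hT0]
        rw [hueq s hs0 x hx, hrest, integral_zero_measure, add_zero]
        refine hE1.trans (mul_le_mul_of_nonneg_right ?_ hVs.le)
        have hTs : T - s = 0 := by rw [hs00, hT0]; ring
        simp only [hφdef, hTs, mul_zero]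
        rw [Finset.sum_range_succ']
        simp [zero_pow]
        linarith
      · have hTpos : 0 < T := lt_of_le_of_ne hT (Ne.symm hT0)
        have hβ0 : ∀ r ∈ Set.Icc s T, 0 ≤ B / T + L * φ n r := fun r hr =>
          add_nonneg (div_nonneg hB0 hTpos.le) (mul_nonneg hL (hφ0 n r hr.2))
        -- pointwise estimate on f
        have hptw : ∀ r ∈ Set.Icc s T, ∀ ω,
            |f r (X s r x ω) (u r (X s r x ω))| ≤ (B / T + L * φ n r) * V r (X s r x ω) := by
          intro r hr ω
          have hrt : r ∈ Set.Icc t T := ⟨hs.1.trans hr.1, hr.2⟩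
          have hr0 : r ∈ Set.Icc (0 : ℝ) T := ⟨ht.1.trans hrt.1, hr.2⟩
          have hy := hXO s hs0 r hr x hx ω
          set y := X s r x ω with hydef
          have hlip := hfLip r hr0 y hy (u r y) 0
          rw [sub_zero] at hlip
          have h1 : |f r y (u r y)| ≤ |f r y 0| + L * |u r y| := by
            have := abs_add_le (f r y (u r y) - f r y 0) (f r y 0)
            rw [sub_add_cancel] at this
            linarith
          have h2 : |f r y 0| ≤ B / T * V r y := by
            rw [div_mul_eq_mul_div, le_div_iff₀ hTpos]
            calc |f r y 0| * T = T * |f r y 0| := mul_comm _ _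
              _ ≤ B * V r y := hBb r hrt y hy
          have h3 := ih r hrt y hy
          calc |f r y (u r y)| ≤ |f r y 0| + L * |u r y| := h1
            _ ≤ B / T * V r y + L * (φ n r * V r y) :=
                add_le_add h2 (mul_le_mul_of_nonneg_left h3 hL)
            _ = (B / T + L * φ n r) * V r y := by ring
        -- inner integral estimate
        have hinner : ∀ r ∈ Set.Icc s T,
            |∫ ω, f r (X s r x ω) (u r (X s r x ω)) ∂P| ≤ (B / T + L * φ n r) * V s x := by
          intro r hr
          have hb := hβ0 r hr
          have hlin : (∫⁻ ω, ENNReal.ofReal |f r (X s r x ω) (u r (X s r x ω))| ∂P)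
              ≤ ENNReal.ofReal ((B / T + L * φ n r) * V s x) := by
            calc (∫⁻ ω, ENNReal.ofReal |f r (X s r x ω) (u r (X s r x ω))| ∂P)
                ≤ ∫⁻ ω, ENNReal.ofReal (B / T + L * φ n r)
                    * ENNReal.ofReal (V r (X s r x ω)) ∂P := by
                  refine lintegral_mono fun ω => ?_
                  rw [← ENNReal.ofReal_mul hb]
                  exact ofReal_le_ofReal (hptw r hr ω)
              _ = ENNReal.ofReal (B / T + L * φ n r)
                    * ∫⁻ ω, ENNReal.ofReal (V r (X s r x ω)) ∂P :=
                  lintegral_const_mul' _ _ ofReal_ne_top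
              _ ≤ ENNReal.ofReal (B / T + L * φ n r) * ENNReal.ofReal (V s x) :=
                  mul_le_mul_right (hVX s hs0 r hr x hx) _
              _ = ENNReal.ofReal ((B / T + L * φ n r) * V s x) :=
                  (ENNReal.ofReal_mul hb).symm
          calc |∫ ω, f r (X s r x ω) (u r (X s r x ω)) ∂P|
              ≤ (∫⁻ ω, ENNReal.ofReal |f r (X s r x ω) (u r (X s r x ω))| ∂P).toReal := by
                simpa [Real.norm_eq_abs] using
                  norm_integral_le_lintegral_norm (μ := P)
                    (fun ω => f r (X s r x ω) (u r (X s r x ω)))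
            _ ≤ (ENNReal.ofReal ((B / T + L * φ n r) * V s x)).toReal :=
                ENNReal.toReal_mono ofReal_ne_top hlin
            _ = (B / T + L * φ n r) * V s x :=
                ENNReal.toReal_ofReal (mul_nonneg hb hVs.le)
        -- outer integral estimate
        set G : ℝ → ℝ := fun r => (B / T + L * φ n r) * V s x with hGdef
        have hGcont : Continuous G :=
          (continuous_const.add (continuous_const.mul (hφcont n))).mul continuous_const
        have hGint : IntegrableOn G (Set.Icc s T) := hGcont.integrableOn_Icc
        have hGnn : ∀ r ∈ Set.Icc s T, 0 ≤ G r := fun r hr => mul_nonneg (hβ0 r hr) hVs.le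
        have hE2 : |∫ r in Set.Icc s T, (∫ ω, f r (X s r x ω) (u r (X s r x ω)) ∂P)|
            ≤ ∫ r in Set.Icc s T, G r := by
          have hlin2 : (∫⁻ r in Set.Icc s T,
                ENNReal.ofReal |∫ ω, f r (X s r x ω) (u r (X s r x ω)) ∂P|)
              ≤ ENNReal.ofReal (∫ r in Set.Icc s T, G r) := by
            rw [ofReal_integral_eq_lintegral_ofReal hGint
              ((ae_restrict_iff' measurableSet_Icc).mpr (ae_of_all _ hGnn))]
            exact setLIntegral_mono hGcont.measurable.ennreal_ofReal fun r hr =>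
              ofReal_le_ofReal (hinner r hr)
          calc |∫ r in Set.Icc s T, (∫ ω, f r (X s r x ω) (u r (X s r x ω)) ∂P)|
              ≤ (∫⁻ r in Set.Icc s T,
                  ENNReal.ofReal |∫ ω, f r (X s r x ω) (u r (X s r x ω)) ∂P|).toReal := by
                simpa [Real.norm_eq_abs] using
                  norm_integral_le_lintegral_norm
                    (μ := volume.restrict (Set.Icc s T))
                    (fun r => ∫ ω, f r (X s r x ω) (u r (X s r x ω)) ∂P)
            _ ≤ (ENNReal.ofReal (∫ r in Set.Icc s T, G r)).toReal :=
                ENNReal.toReal_mono ofReal_ne_top hlin2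
            _ = ∫ r in Set.Icc s T, G r :=
                ENNReal.toReal_ofReal (setIntegral_nonneg measurableSet_Icc hGnn)
        -- compute the outer integral
        have hIcc : ∫ r in Set.Icc s T, G r = (∫ r in s..T, (B / T + L * φ n r)) * V s x := by
          rw [MeasureTheory.integral_Icc_eq_integral_Ioc,
            ← intervalIntegral.integral_of_le hs.2, ← intervalIntegral.integral_mul_const]
        have hpow : ∀ k : ℕ, (∫ r in s..T, (L * (T - r)) ^ k / (Nat.factorial k : ℝ))
            = L ^ k * (T - s) ^ (k + 1) / ((k + 1) * (Nat.factorial k : ℝ)) := by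
          intro k
          rw [intervalIntegral.integral_div, intPow L T s k, div_div]
        have hφint : ∫ r in s..T, φ n r
            = (A + B) * ∑ k ∈ Finset.range n,
                L ^ k * (T - s) ^ (k + 1) / ((k + 1) * (Nat.factorial k : ℝ))
              + C * (L ^ n * (T - s) ^ (n + 1) / ((n + 1) * (Nat.factorial n : ℝ))) := by
          have hik : ∀ k : ℕ, IntervalIntegrable
              (fun r : ℝ => (L * (T - r)) ^ k / (Nat.factorial k : ℝ)) volume s T := fun k =>
            (by fun_prop :
              Continuous fun r : ℝ => (L * (T - r)) ^ k / (Nat.factorial k : ℝ)).intervalIntegrable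
              s T
          have hcont1 : Continuous fun r : ℝ =>
              (A + B) * ∑ k ∈ Finset.range n, (L * (T - r)) ^ k / (Nat.factorial k : ℝ) := by
            fun_prop
          have hcont2 : Continuous fun r : ℝ =>
              C * ((L * (T - r)) ^ n / (Nat.factorial n : ℝ)) := by fun_prop
          simp only [hφdef]
          rw [intervalIntegral.integral_add (hcont1.intervalIntegrable s T)
            (hcont2.intervalIntegrable s T),
            intervalIntegral.integral_const_mul, intervalIntegral.integral_const_mul,
            intervalIntegral.integral_finset_sum (fun k _ => hik k)]
          simp only [hpow]
        have hJ : ∫ r in s..T, (B / T + L * φ n r)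
            = B / T * (T - s) + L * ∫ r in s..T, φ n r := by
          rw [intervalIntegral.integral_add (f := fun _ => B / T) (g := fun r => L * φ n r)
            intervalIntegrable_const
            ((continuous_const.mul (hφcont n)).intervalIntegrable s T),
            intervalIntegral.integral_const, intervalIntegral.integral_const_mul]
          simp [smul_eq_mul]
          ring
        -- algebraic inequality
        have halg : A + (B / T * (T - s) + L * ((A + B) * ∑ k ∈ Finset.range n,
              L ^ k * (T - s) ^ (k + 1) / ((k + 1) * (Nat.factorial k : ℝ))
            + C * (L ^ n * (T - s) ^ (n + 1) / ((n + 1) * (Nat.factorial n : ℝ)))))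
            ≤ φ (n + 1) s := by
          have hBs : B / T * (T - s) ≤ B := by
            have h1 : T - s ≤ T := by linarith [hs0.1]
            calc B / T * (T - s) ≤ B / T * T :=
                mul_le_mul_of_nonneg_left h1 (div_nonneg hB0 hTpos.le)
              _ = B := div_mul_cancel₀ B hT0
          have hterm : ∀ k : ℕ,
              L * (L ^ k * (T - s) ^ (k + 1) / ((k + 1) * (Nat.factorial k : ℝ)))
              = (L * (T - s)) ^ (k + 1) / (Nat.factorial (k + 1) : ℝ) := by
            intro k
            rw [Nat.factorial_succ]
            push_cast
            rw [mul_pow, pow_succ]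
            ring
          have hre : L * ((A + B) * ∑ k ∈ Finset.range n,
                L ^ k * (T - s) ^ (k + 1) / ((k + 1) * (Nat.factorial k : ℝ))
              + C * (L ^ n * (T - s) ^ (n + 1) / ((n + 1) * (Nat.factorial n : ℝ))))
              = (A + B) * ∑ k ∈ Finset.range n,
                  (L * (T - s)) ^ (k + 1) / (Nat.factorial (k + 1) : ℝ)
                + C * ((L * (T - s)) ^ (n + 1) / (Nat.factorial (n + 1) : ℝ)) := by
            rw [mul_add]
            congr 1
            · rw [mul_left_comm]
              congr 1
              rw [Finset.mul_sum]
              exact Finset.sum_congr rfl fun k _ => hterm k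
            · rw [mul_left_comm, hterm n]
          have hsum : ∑ k ∈ Finset.range (n + 1), (L * (T - s)) ^ k / (Nat.factorial k : ℝ)
              = (∑ k ∈ Finset.range n, (L * (T - s)) ^ (k + 1) / (Nat.factorial (k + 1) : ℝ))
                + 1 := by
            rw [Finset.sum_range_succ']
            norm_num
          simp only [hφdef]
          rw [hre, hsum]
          have hS0 : 0 ≤ ∑ k ∈ Finset.range n,
              (L * (T - s)) ^ (k + 1) / (Nat.factorial (k + 1) : ℝ) := by
            refine Finset.sum_nonneg fun k _ => div_nonneg
              (pow_nonneg (mul_nonneg hL (by linarith [hs.2])) _) (Nat.cast_nonneg _)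
          nlinarith [hBs]
        -- assemble
        rw [hueq s hs0 x hx]
        calc |(∫ ω, g (X s T x ω) ∂P)
              + ∫ r in Set.Icc s T, (∫ ω, f r (X s r x ω) (u r (X s r x ω)) ∂P)|
            ≤ |∫ ω, g (X s T x ω) ∂P|
              + |∫ r in Set.Icc s T, (∫ ω, f r (X s r x ω) (u r (X s r x ω)) ∂P)| :=
              abs_add_le _ _
          _ ≤ A * V s x + ∫ r in Set.Icc s T, G r := add_le_add hE1 hE2
          _ = (A + (B / T * (T - s) + L * ((A + B) * ∑ k ∈ Finset.range n,
                L ^ k * (T - s) ^ (k + 1) / ((k + 1) * (Nat.factorial k : ℝ))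
              + C * (L ^ n * (T - s) ^ (n + 1) / ((n + 1) * (Nat.factorial n : ℝ))))))
              * V s x := by
              rw [hIcc, hJ, hφint]; ring
          _ ≤ φ (n + 1) s * V s x := mul_le_mul_of_nonneg_right halg hVs.le
  -- pass to the limit
  refine iSup_le fun xx => ?_
  obtain ⟨x, hx⟩ := xx
  have hVt := hVpos t ht x hx
  have h1 : Filter.Tendsto (fun n => φ n t) Filter.atTop
      (nhds ((A + B) * Real.exp (L * (T - t)))) := by
    have h2 := (sumExpTendsto (L * (T - t))).const_mul (A + B)
    have h3 := (FloorSemiring.tendsto_pow_div_factorial_atTop (K := ℝ) (L * (T - t))).const_mul C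
    have h4 := h2.add h3
    simpa [hφdef] using h4
  have hlim : Filter.Tendsto (fun n => φ n t * V t x) Filter.atTop
      (nhds ((A + B) * Real.exp (L * (T - t)) * V t x)) := h1.mul_const _
  have hle : |u t x| ≤ (A + B) * Real.exp (L * (T - t)) * V t x :=
    ge_of_tendsto' hlim fun n => key n t ⟨le_rfl, ht.2⟩ x hx
  have hdiv : |u t x| / V t x ≤ (A + B) * Real.exp (L * (T - t)) :=
    (div_le_iff₀ hVt).mpr hle
  calc ENNReal.ofReal (|u t x| / V t x)
      ≤ ENNReal.ofReal ((A + B) * Real.exp (L * (T - t))) := ofReal_le_ofReal hdiv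
    _ = (ENNReal.ofReal A + ENNReal.ofReal B) * ENNReal.ofReal (Real.exp (L * (T - t))) := by
        rw [ENNReal.ofReal_mul (add_nonneg hA0 hB0), ENNReal.ofReal_add hA0 hB0]
    _ = (Sg + SB) * ENNReal.ofReal (Real.exp (L * (T - t))) := by
        rw [hAdef, hBdef, ENNReal.ofReal_toReal hSg_ne, ENNReal.ofReal_toReal hSB_ne]
end
end

section
/- Let N ∈ ℕ, a, b, c ∈ [0,∞), α ∈ ℝ, β ∈ [α,∞), p ∈ [1,∞), let f_n : [α,β] → [0,∞], n ∈ ℕ₀, be measurable, assume sup_{s ∈ [α,β]} f₀(s) < ∞, and assume for all n ∈ {1,2,…,N} and t ∈ [α,β] that f_n(t) ≤ a cⁿ + Σ_{ℓ=0}^{n−1} b c^{n−ℓ−1} (∫_α^t (f_ℓ(s))^p ds)^{1/p}. Then f_N(β) ≤ [ a + b(β−α)^{1/p} · sup_{s ∈ [α,β]} f₀(s) ] · [ max_{k ∈ {0,1,…,N}} c^{N−k}/(k!)^{1/p} ] · [ 1 + b(β−α)^{1/p} ]^{N−1}. -/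
open MeasureTheory ENNReal

namespace Stmt15Aux

open Finset


noncomputable def tau (p α : ℝ) (j : ℕ) (t : ℝ) : ℝ≥0∞ :=
  (ENNReal.ofReal ((t - α) ^ j / j.factorial)) ^ (1 / p)

lemma tau_meas (p α : ℝ) (j : ℕ) : Measurable (tau p α j) := by
  apply (ENNReal.continuous_rpow_const.comp (ENNReal.continuous_ofReal.comp (by continuity))).measurable

lemma tau_zero (p α t : ℝ) : tau p α 0 t = 1 := by
  simp [tau]

lemma tau_pow {p : ℝ} (hp : 1 ≤ p) (α : ℝ) (j : ℕ) (s : ℝ) :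
    (tau p α j s) ^ p = ENNReal.ofReal ((s - α) ^ j / j.factorial) := by
  have hp0 : p ≠ 0 := by positivity
  rw [tau, ← ENNReal.rpow_mul, one_div_mul_cancel hp0, ENNReal.rpow_one]

lemma lint_tau {p : ℝ} (hp : 1 ≤ p) {α : ℝ} (j : ℕ) {t : ℝ} (h : α ≤ t) :
    ∫⁻ s in Set.Icc α t, (tau p α j s) ^ p
      = ENNReal.ofReal ((t - α) ^ (j + 1) / (j + 1).factorial) := by
  simp_rw [tau_pow hp]
  rw [← Measure.restrict_congr_set Ioc_ae_eq_Icc]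
  have hcont : Continuous fun s : ℝ => (s - α) ^ j / (j.factorial : ℝ) := by continuity
  rw [← ofReal_integral_eq_lintegral_ofReal (hcont.integrableOn_Ioc)
    ((ae_restrict_iff' measurableSet_Ioc).2 (ae_of_all _ fun x hx => by
      have : (0:ℝ) ≤ x - α := by linarith [hx.1]
      positivity))]
  congr 1
  rw [← intervalIntegral.integral_of_le h]
  have : ∫ x in α..t, (x - α) ^ j / (j.factorial : ℝ)
      = (∫ x in α..t, (x - α) ^ j) / (j.factorial : ℝ) := by
    rw [intervalIntegral.integral_div]
  rw [this, intervalIntegral.integral_comp_sub_right (fun x => x ^ j) α, sub_self,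
    integral_pow]
  have hj : ((j + 1).factorial : ℝ) = (j + 1) * j.factorial := by
    rw [Nat.factorial_succ]; push_cast; ring
  rw [hj]
  have h1 : (j.factorial : ℝ) ≠ 0 := by positivity
  have h2 : ((j:ℝ) + 1) ≠ 0 := by positivity
  field_simp
  simp

lemma lint_term {p : ℝ} (hp : 1 ≤ p) {α : ℝ} {r : ℝ} (hr : 0 ≤ r) (j : ℕ) {t : ℝ} (h : α ≤ t) :
    (∫⁻ s in Set.Icc α t, (ENNReal.ofReal r * tau p α j s) ^ p) ^ (1 / p)
      = ENNReal.ofReal r * tau p α (j + 1) t := by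
  have hppos : (0:ℝ) < p := by positivity
  have hmeas : Measurable fun s => (tau p α j s) ^ p :=
    (ENNReal.continuous_rpow_const.measurable).comp (tau_meas p α j)
  simp_rw [ENNReal.mul_rpow_of_nonneg _ _ hppos.le]
  rw [lintegral_const_mul _ hmeas, lint_tau hp j h,
    ENNReal.mul_rpow_of_nonneg _ _ (by positivity : (0:ℝ) ≤ 1/p),
    ← ENNReal.rpow_mul, mul_one_div_cancel hppos.ne', ENNReal.rpow_one]
  rfl

lemma lp_sum_le {ι : Type*} (s : Finset ι) (F : ι → ℝ → ℝ≥0∞)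
    (hF : ∀ i, Measurable (F i)) (μ : Measure ℝ) {p : ℝ} (hp : 1 ≤ p) :
    (∫⁻ x, (∑ i ∈ s, F i x) ^ p ∂μ) ^ (1/p) ≤ ∑ i ∈ s, (∫⁻ x, (F i x) ^ p ∂μ) ^ (1/p) := by
  classical
  have hppos : (0:ℝ) < p := by positivity
  induction s using Finset.induction_on with
  | empty =>
      simp only [Finset.sum_empty, ENNReal.zero_rpow_of_pos hppos, lintegral_zero,
        ENNReal.zero_rpow_of_pos (by positivity : (0:ℝ) < 1/p), le_refl]
  | insert i s' hnotmem ih =>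
      rw [Finset.sum_insert hnotmem]
      refine le_trans ?_ (add_le_add_right ih _)
      have := ENNReal.lintegral_Lp_add_le (μ := μ) (f := F i)
        (g := fun x => ∑ k ∈ s', F k x) (hF i).aemeasurable
        (Finset.measurable_sum _ (fun k _ => hF k)).aemeasurable hp
      simp only [Pi.add_apply] at this
      simpa [Finset.sum_insert hnotmem] using this

lemma tri {M : Type*} [AddCommMonoid M] (m : ℕ) (F : ℕ → ℕ → M) :
    ∑ i ∈ range m, ∑ j ∈ range (i + 1), F i j
      = ∑ j ∈ range m, ∑ i ∈ Ico j m, F i j := by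
  induction m with
  | zero => simp
  | succ m ih =>
      have h1 : ∀ j ∈ range m, ∑ i ∈ Ico j (m+1), F i j
          = ∑ i ∈ Ico j m, F i j + F m j := by
        intro j hj
        rw [Finset.sum_Ico_succ_top (le_of_lt (Finset.mem_range.1 hj))]
      have key : ∑ j ∈ range (m+1), ∑ i ∈ Ico j (m+1), F i j
          = ∑ j ∈ range m, ∑ i ∈ Ico j m, F i j + ∑ j ∈ range (m+1), F m j := by
        rw [Finset.sum_range_succ, Finset.sum_congr rfl h1, Finset.sum_add_distrib]
        have h2 : ∑ i ∈ Ico m (m+1), F i m = F m m := by simp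
        rw [h2, Finset.sum_range_succ _ m]
        abel
      rw [Finset.sum_range_succ, ih, key]

lemma hockey {j m : ℕ} (hjm : j < m) :
    ∑ i ∈ Ico j m, (i.choose j) = m.choose (j + 1) := by
  obtain ⟨m', rfl⟩ : ∃ m', m = m' + 1 := ⟨m - 1, by omega⟩
  rw [Finset.Ico_add_one_right_eq_Icc, Nat.sum_Icc_choose]


noncomputable def Pco (a b c : ℝ) (n j : ℕ) : ℝ≥0∞ :=
  ENNReal.ofReal (a * b ^ j * c ^ (n - j) * ((n - 1).choose j))

noncomputable def Qco (Sr b c : ℝ) (n j : ℕ) : ℝ≥0∞ :=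
  ENNReal.ofReal (Sr * b ^ (j + 1) * c ^ (n - 1 - j) * ((n - 1).choose j))

lemma key (N : ℕ) (a b c : ℝ) (ha : 0 ≤ a) (hb : 0 ≤ b) (hc : 0 ≤ c)
    (α β : ℝ) (hαβ : α ≤ β) (p : ℝ) (hp : 1 ≤ p)
    (f : ℕ → ℝ → ℝ≥0∞) (Sr : ℝ) (hSr : 0 ≤ Sr)
    (hS : ∀ s ∈ Set.Icc α β, f 0 s ≤ ENNReal.ofReal Sr)
    (hrec : ∀ n, 1 ≤ n → n ≤ N → ∀ t ∈ Set.Icc α β,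
      f n t ≤ ENNReal.ofReal (a * c ^ n)
        + ∑ ℓ ∈ Finset.range n, ENNReal.ofReal (b * c ^ (n - ℓ - 1))
            * (∫⁻ s in Set.Icc α t, (f ℓ s) ^ p) ^ (1 / p)) :
    ∀ n, 1 ≤ n → n ≤ N → ∀ t ∈ Set.Icc α β,
      f n t ≤ ∑ j ∈ range n, Pco a b c n j * tau p α j t
            + ∑ j ∈ range n, Qco Sr b c n j * tau p α (j + 1) t := by
  intro n
  induction n using Nat.strong_induction_on with
  | _ n ih =>
  intro hn1 hnN t ht
  obtain ⟨m, rfl⟩ : ∃ m, n = m + 1 := ⟨n - 1, by omega⟩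
  have hαt : α ≤ t := ht.1
  have htβ : t ≤ β := ht.2
  have h1p : (0:ℝ) ≤ 1 / p := by positivity
  have hppos : (0:ℝ) < p := by positivity
  -- the lintegral quantities
  set I : ℕ → ℝ≥0∞ := fun ℓ => (∫⁻ s in Set.Icc α t, (f ℓ s) ^ p) ^ (1/p) with hIdef
  -- bound on I 0
  have hI0 : I 0 ≤ ENNReal.ofReal Sr * tau p α 1 t := by
    rw [show (1:ℕ) = 0 + 1 from rfl, ← lint_term hp hSr 0 hαt]
    refine ENNReal.rpow_le_rpow (setLIntegral_mono ?_ ?_) h1p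
    · exact (ENNReal.continuous_rpow_const.measurable).comp
        (measurable_const.mul (tau_meas p α 0))
    · intro s hs
      refine ENNReal.rpow_le_rpow ?_ hppos.le
      have hsβ : s ∈ Set.Icc α β := ⟨hs.1, le_trans hs.2 htβ⟩
      calc f 0 s ≤ ENNReal.ofReal Sr := hS s hsβ
        _ = ENNReal.ofReal Sr * tau p α 0 s := by rw [tau_zero, mul_one]
  -- bound on I (i+1), i < m
  have hIl : ∀ i ∈ range m, I (i+1) ≤ ∑ j ∈ range (i+1),
      (Pco a b c (i+1) j * tau p α (j+1) t + Qco Sr b c (i+1) j * tau p α (j+2) t) := by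
    intro i hi
    have hi' := Finset.mem_range.1 hi
    set F : ℕ → ℝ → ℝ≥0∞ := fun j s =>
      Pco a b c (i+1) j * tau p α j s + Qco Sr b c (i+1) j * tau p α (j+1) s with hFdef
    have hFmeas : ∀ j, Measurable (F j) :=
      fun j => (measurable_const.mul (tau_meas p α j)).add
        (measurable_const.mul (tau_meas p α (j+1)))
    have step1 : I (i+1) ≤ (∫⁻ s in Set.Icc α t, (∑ j ∈ range (i+1), F j s) ^ p) ^ (1/p) := by
      refine ENNReal.rpow_le_rpow (setLIntegral_mono ?_ ?_) h1p
      · exact (ENNReal.continuous_rpow_const.measurable).comp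
          (Finset.measurable_sum _ (fun j _ => hFmeas j))
      · intro s hs
        refine ENNReal.rpow_le_rpow ?_ hppos.le
        have hsβ : s ∈ Set.Icc α β := ⟨hs.1, le_trans hs.2 htβ⟩
        have := ih (i+1) (by omega) (by omega) (by omega) s hsβ
        rw [← Finset.sum_add_distrib] at this
        exact this
    refine step1.trans ?_
    refine (lp_sum_le (range (i+1)) F hFmeas _ hp).trans ?_
    refine Finset.sum_le_sum fun j _ => ?_
    have hmink := ENNReal.lintegral_Lp_add_le
      (μ := volume.restrict (Set.Icc α t))
      (f := fun s => Pco a b c (i+1) j * tau p α j s)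
      (g := fun s => Qco Sr b c (i+1) j * tau p α (j+1) s)
      ((measurable_const.mul (tau_meas p α j)).aemeasurable)
      ((measurable_const.mul (tau_meas p α (j+1))).aemeasurable) hp
    simp only [Pi.add_apply] at hmink
    refine hmink.trans ?_
    rw [Pco, Qco, lint_term hp (by positivity) j hαt, lint_term hp (by positivity) (j+1) hαt]
  -- coefficient identities
  have coefA : ∀ j ∈ range m,
      ∑ i ∈ Ico j m, ENNReal.ofReal (b * c ^ (m - i - 1)) * (Pco a b c (i+1) j * tau p α (j+1) t)
        = Pco a b c (m+1) (j+1) * tau p α (j+1) t := by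
    intro j hj
    have hj' := Finset.mem_range.1 hj
    simp_rw [← mul_assoc]
    rw [← Finset.sum_mul]
    congr 1
    have h1 : ∀ i ∈ Ico j m, ENNReal.ofReal (b * c ^ (m - i - 1)) * Pco a b c (i+1) j
        = ENNReal.ofReal ((a * b ^ (j+1) * c ^ (m - j)) * (i.choose j : ℝ)) := by
      intro i hi
      obtain ⟨hji, him⟩ := Finset.mem_Ico.1 hi
      rw [Pco, ← ENNReal.ofReal_mul (by positivity)]
      congr 1
      rw [show i + 1 - 1 = i from by omega, show m - j = (m - i - 1) + (i + 1 - j) from by omega,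
        pow_add, pow_succ]
      ring
    rw [Finset.sum_congr rfl h1, ← ENNReal.ofReal_sum_of_nonneg (fun i _ => by positivity),
      ← Finset.mul_sum, Pco]
    congr 1
    rw [show m + 1 - (j+1) = m - j from by omega, show m + 1 - 1 = m from by omega,
      ← Nat.cast_sum, hockey hj']
  have coefB : ∀ j ∈ range m,
      ∑ i ∈ Ico j m, ENNReal.ofReal (b * c ^ (m - i - 1)) * (Qco Sr b c (i+1) j * tau p α (j+2) t)
        = Qco Sr b c (m+1) (j+1) * tau p α (j+2) t := by
    intro j hj
    have hj' := Finset.mem_range.1 hj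
    simp_rw [← mul_assoc]
    rw [← Finset.sum_mul]
    congr 1
    have h1 : ∀ i ∈ Ico j m, ENNReal.ofReal (b * c ^ (m - i - 1)) * Qco Sr b c (i+1) j
        = ENNReal.ofReal ((Sr * b ^ (j+2) * c ^ (m - 1 - j)) * (i.choose j : ℝ)) := by
      intro i hi
      obtain ⟨hji, him⟩ := Finset.mem_Ico.1 hi
      rw [Qco, ← ENNReal.ofReal_mul (by positivity)]
      congr 1
      rw [show i + 1 - 1 = i from by omega,
        show m - 1 - j = (m - i - 1) + (i - j) from by omega, pow_add,
        show j + 2 = (j + 1) + 1 from rfl, pow_succ]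
      ring
    rw [Finset.sum_congr rfl h1, ← ENNReal.ofReal_sum_of_nonneg (fun i _ => by positivity),
      ← Finset.mul_sum, Qco]
    congr 1
    rw [show m + 1 - 1 - (j+1) = m - 1 - j from by omega, show m + 1 - 1 = m from by omega,
      ← Nat.cast_sum, hockey hj']
  have expand : ∑ i ∈ range m, ENNReal.ofReal (b * c ^ (m - i - 1))
        * (∑ j ∈ range (i+1), (Pco a b c (i+1) j * tau p α (j+1) t
            + Qco Sr b c (i+1) j * tau p α (j+2) t))
      = ∑ j ∈ range m, Pco a b c (m+1) (j+1) * tau p α (j+1) t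
        + ∑ j ∈ range m, Qco Sr b c (m+1) (j+1) * tau p α (j+2) t := by
    simp_rw [Finset.mul_sum, mul_add, Finset.sum_add_distrib]
    rw [tri m (fun i j => ENNReal.ofReal (b * c ^ (m - i - 1)) * (Pco a b c (i+1) j * tau p α (j+1) t)),
      tri m (fun i j => ENNReal.ofReal (b * c ^ (m - i - 1)) * (Qco Sr b c (i+1) j * tau p α (j+2) t))]
    rw [Finset.sum_congr rfl coefA, Finset.sum_congr rfl coefB]
  have hP0 : Pco a b c (m+1) 0 * tau p α 0 t = ENNReal.ofReal (a * c ^ (m+1)) := by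
    rw [Pco, tau_zero, mul_one]
    norm_num
  have hQ0 : Qco Sr b c (m+1) 0 * tau p α (0+1) t
      = ENNReal.ofReal (b * c ^ m) * (ENNReal.ofReal Sr * tau p α 1 t) := by
    rw [Qco, ← mul_assoc, ← ENNReal.ofReal_mul (by positivity)]
    congr 2
    norm_num
    ring
  calc f (m+1) t
      ≤ ENNReal.ofReal (a * c ^ (m+1)) + ∑ ℓ ∈ range (m+1),
          ENNReal.ofReal (b * c ^ (m+1-ℓ-1)) * I ℓ := hrec (m+1) hn1 hnN t ht
    _ = ENNReal.ofReal (a * c ^ (m+1)) + (∑ i ∈ range m,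
          ENNReal.ofReal (b * c ^ (m+1-(i+1)-1)) * I (i+1)
          + ENNReal.ofReal (b * c ^ (m+1-0-1)) * I 0) := by
        rw [Finset.sum_range_succ' (fun ℓ => ENNReal.ofReal (b * c ^ (m+1-ℓ-1)) * I ℓ) m]
    _ ≤ ENNReal.ofReal (a * c ^ (m+1)) + (∑ i ∈ range m,
          ENNReal.ofReal (b * c ^ (m-i-1)) * (∑ j ∈ range (i+1),
            (Pco a b c (i+1) j * tau p α (j+1) t + Qco Sr b c (i+1) j * tau p α (j+2) t))
          + ENNReal.ofReal (b * c ^ m) * (ENNReal.ofReal Sr * tau p α 1 t)) := by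
        refine add_le_add_right (add_le_add ?_ ?_) _
        · refine Finset.sum_le_sum fun i hi => ?_
          rw [show m+1-(i+1)-1 = m-i-1 from by omega]
          exact mul_le_mul_right (hIl i hi) _
        · rw [show m+1-0-1 = m from by omega]
          exact mul_le_mul_right hI0 _
    _ = ∑ j ∈ range (m+1), Pco a b c (m+1) j * tau p α j t
        + ∑ j ∈ range (m+1), Qco Sr b c (m+1) j * tau p α (j+1) t := by
        rw [expand,
          Finset.sum_range_succ' (fun j => Pco a b c (m+1) j * tau p α j t) m,
          Finset.sum_range_succ' (fun j => Qco Sr b c (m+1) j * tau p α (j+1) t) m,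
          hP0, hQ0]
        ring


end Stmt15Aux

open Stmt15Aux in
/-- Gronwall-type inequality, Lemma `g09-1`.
Let `N ∈ ℕ`, `a, b, c ∈ [0,∞)`, `α ∈ ℝ`, `β ∈ [α,∞)`, `p ∈ [1,∞)`, let
`f_n : [α,β] → [0,∞]`, `n ∈ ℕ₀`, be measurable, assume `sup_{s∈[α,β]} f₀(s) < ∞`,
and assume for all `n ∈ {1,…,N}`, `t ∈ [α,β]` that
`f_n(t) ≤ a cⁿ + Σ_{ℓ=0}^{n-1} b c^{n-ℓ-1} (∫_α^t (f_ℓ(s))^p ds)^{1/p}`.  Then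
`f_N(β) ≤ [a + b (β-α)^{1/p} sup_{s∈[α,β]} f₀(s)]
          · [max_{0≤k≤N} c^{N-k}/(k!)^{1/p}] · [1 + b (β-α)^{1/p}]^{N-1}`. -/
theorem stmt_15
    (N : ℕ) (hN : 1 ≤ N)
    (a b c : ℝ) (ha : 0 ≤ a) (hb : 0 ≤ b) (hc : 0 ≤ c)
    (α β : ℝ) (hαβ : α ≤ β)
    (p : ℝ) (hp : 1 ≤ p)
    (f : ℕ → ℝ → ℝ≥0∞)
    (hfmeas : ∀ n, Measurable fun s : Set.Icc α β => f n s.1)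
    (hf0 : (⨆ s : Set.Icc α β, f 0 s.1) < ⊤)
    (hrec : ∀ n, 1 ≤ n → n ≤ N → ∀ t ∈ Set.Icc α β,
      f n t ≤ ENNReal.ofReal (a * c ^ n)
        + ∑ ℓ ∈ Finset.range n,
            ENNReal.ofReal (b * c ^ (n - ℓ - 1))
              * (∫⁻ s in Set.Icc α t, (f ℓ s) ^ p) ^ (1 / p)) :
    f N β ≤
      (ENNReal.ofReal a
          + ENNReal.ofReal (b * (β - α) ^ (1 / p)) * (⨆ s : Set.Icc α β, f 0 s.1))
        * (⨆ k ∈ Finset.range (N + 1),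
            ENNReal.ofReal (c ^ (N - k) / ((k.factorial : ℝ) ^ (1 / p))))
        * ENNReal.ofReal ((1 + b * (β - α) ^ (1 / p)) ^ (N - 1)) := by
  have hppos : (0:ℝ) < p := by positivity
  have h1p : (0:ℝ) ≤ 1 / p := by positivity
  set S : ℝ≥0∞ := ⨆ s : Set.Icc α β, f 0 s.1 with hSdef
  set Sr : ℝ := S.toReal with hSrdef
  have hSr : 0 ≤ Sr := ENNReal.toReal_nonneg
  have hSS : S = ENNReal.ofReal Sr := (ENNReal.ofReal_toReal hf0.ne).symm
  have hS : ∀ s ∈ Set.Icc α β, f 0 s ≤ ENNReal.ofReal Sr := by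
    intro s hs
    rw [← hSS]
    exact le_iSup (fun x : Set.Icc α β => f 0 x.1) (⟨s, hs⟩ : Set.Icc α β)
  set τ : ℝ := (β - α) ^ (1 / p) with hτdef
  have hβα : (0:ℝ) ≤ β - α := by linarith
  have hτ : 0 ≤ τ := Real.rpow_nonneg hβα _
  set M : ℝ≥0∞ := ⨆ k ∈ Finset.range (N + 1),
      ENNReal.ofReal (c ^ (N - k) / ((k.factorial : ℝ) ^ (1 / p))) with hMdef
  have hM : ∀ k ∈ Finset.range (N+1),
      ENNReal.ofReal (c ^ (N - k) / ((k.factorial : ℝ) ^ (1 / p))) ≤ M := by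
    intro k hk
    exact le_iSup₂ (f := fun k (_ : k ∈ Finset.range (N+1)) =>
      ENNReal.ofReal (c ^ (N - k) / ((k.factorial : ℝ) ^ (1 / p)))) k hk
  have htau : ∀ j : ℕ, tau p α j β
      = ENNReal.ofReal (τ ^ j / ((j.factorial : ℝ) ^ (1 / p))) := by
    intro j
    rw [tau, ENNReal.ofReal_rpow_of_nonneg (by positivity) h1p]
    congr 1
    rw [Real.div_rpow (by positivity) (by positivity), hτdef,
      ← Real.rpow_natCast (β - α) j, ← Real.rpow_mul hβα, mul_comm,
      Real.rpow_mul hβα, Real.rpow_natCast]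
  have hfact : ∀ j : ℕ, (0:ℝ) < (j.factorial : ℝ) ^ (1/p) := by
    intro j
    have : (0:ℝ) < (j.factorial : ℝ) := by exact_mod_cast j.factorial_pos
    positivity
  -- per-term bounds
  have hPterm : ∀ j ∈ Finset.range N, Pco a b c N j * tau p α j β
      ≤ ENNReal.ofReal a * M * ENNReal.ofReal ((b*τ)^j * ((N-1).choose j : ℝ)) := by
    intro j hj
    have hj' := Finset.mem_range.1 hj
    have hfj := hfact j
    have e1 : Pco a b c N j * tau p α j β
        = ENNReal.ofReal a
          * (ENNReal.ofReal (c ^ (N - j) / ((j.factorial : ℝ) ^ (1 / p)))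
            * ENNReal.ofReal ((b*τ)^j * ((N-1).choose j : ℝ))) := by
      have real_eq : a * b ^ j * c ^ (N - j) * ((N-1).choose j : ℝ)
          * (τ ^ j / ((j.factorial : ℝ) ^ (1 / p)))
          = a * ((c ^ (N - j) / ((j.factorial : ℝ) ^ (1 / p)))
              * ((b*τ)^j * ((N-1).choose j : ℝ))) := by
        rw [mul_pow]
        field_simp
      rw [Pco, htau j, ← ENNReal.ofReal_mul (by positivity), real_eq,
        ENNReal.ofReal_mul ha, ENNReal.ofReal_mul (by positivity)]
    rw [e1]
    calc ENNReal.ofReal a * (ENNReal.ofReal (c ^ (N - j) / ((j.factorial : ℝ) ^ (1 / p)))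
            * ENNReal.ofReal ((b*τ)^j * ((N-1).choose j : ℝ)))
        = ENNReal.ofReal (c ^ (N - j) / ((j.factorial : ℝ) ^ (1 / p)))
            * (ENNReal.ofReal a * ENNReal.ofReal ((b*τ)^j * ((N-1).choose j : ℝ))) := by ring
      _ ≤ M * (ENNReal.ofReal a * ENNReal.ofReal ((b*τ)^j * ((N-1).choose j : ℝ))) :=
          mul_le_mul_left (hM j (Finset.mem_range.2 (by omega))) _
      _ = ENNReal.ofReal a * M * ENNReal.ofReal ((b*τ)^j * ((N-1).choose j : ℝ)) := by ring
  have hQterm : ∀ j ∈ Finset.range N, Qco Sr b c N j * tau p α (j+1) β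
      ≤ ENNReal.ofReal (b*τ) * S * M * ENNReal.ofReal ((b*τ)^j * ((N-1).choose j : ℝ)) := by
    intro j hj
    have hj' := Finset.mem_range.1 hj
    have hfj := hfact (j+1)
    have e1 : Qco Sr b c N j * tau p α (j+1) β
        = ENNReal.ofReal (b*τ) * ENNReal.ofReal Sr
          * (ENNReal.ofReal (c ^ (N - (j+1)) / (((j+1).factorial : ℝ) ^ (1 / p)))
            * ENNReal.ofReal ((b*τ)^j * ((N-1).choose j : ℝ))) := by
      have real_eq : Sr * b ^ (j+1) * c ^ (N - 1 - j) * ((N-1).choose j : ℝ)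
          * (τ ^ (j+1) / (((j+1).factorial : ℝ) ^ (1 / p)))
          = (b*τ) * Sr * ((c ^ (N - (j+1)) / (((j+1).factorial : ℝ) ^ (1 / p)))
              * ((b*τ)^j * ((N-1).choose j : ℝ))) := by
        rw [show N - 1 - j = N - (j+1) from by omega, mul_pow, pow_succ, pow_succ]
        field_simp
      rw [Qco, htau (j+1), ← ENNReal.ofReal_mul (by positivity), real_eq,
        ENNReal.ofReal_mul (by positivity), ENNReal.ofReal_mul (by positivity),
        ENNReal.ofReal_mul (by positivity),
        ENNReal.ofReal_mul
          (by positivity : (0:ℝ) ≤ c ^ (N - (j+1)) / (((j+1).factorial:ℝ) ^ (1/p)))]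
    rw [e1, hSS]
    calc ENNReal.ofReal (b*τ) * ENNReal.ofReal Sr
          * (ENNReal.ofReal (c ^ (N - (j+1)) / (((j+1).factorial : ℝ) ^ (1 / p)))
            * ENNReal.ofReal ((b*τ)^j * ((N-1).choose j : ℝ)))
        = ENNReal.ofReal (c ^ (N - (j+1)) / (((j+1).factorial : ℝ) ^ (1 / p)))
          * (ENNReal.ofReal (b*τ) * ENNReal.ofReal Sr
            * ENNReal.ofReal ((b*τ)^j * ((N-1).choose j : ℝ))) := by ring
      _ ≤ M * (ENNReal.ofReal (b*τ) * ENNReal.ofReal Sr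
            * ENNReal.ofReal ((b*τ)^j * ((N-1).choose j : ℝ))) :=
          mul_le_mul_left (hM (j+1) (Finset.mem_range.2 (by omega))) _
      _ = ENNReal.ofReal (b*τ) * ENNReal.ofReal Sr * M
            * ENNReal.ofReal ((b*τ)^j * ((N-1).choose j : ℝ)) := by ring
  -- sum of weights
  have hw : ∑ j ∈ Finset.range N, ENNReal.ofReal ((b*τ)^j * ((N-1).choose j : ℝ))
      = ENNReal.ofReal ((1 + b*τ) ^ (N-1)) := by
    rw [← ENNReal.ofReal_sum_of_nonneg (fun j _ => by positivity)]
    congr 1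
    rw [show (1:ℝ) + b*τ = b*τ + 1 from by ring, add_pow]
    rw [show N - 1 + 1 = N from by omega]
    refine Finset.sum_congr rfl fun j hj => ?_
    rw [one_pow, mul_one]
  have hkey := key N a b c ha hb hc α β hαβ p hp f Sr hSr hS hrec N hN le_rfl β
    ⟨hαβ, le_rfl⟩
  refine hkey.trans ?_
  calc ∑ j ∈ Finset.range N, Pco a b c N j * tau p α j β
        + ∑ j ∈ Finset.range N, Qco Sr b c N j * tau p α (j + 1) β
      ≤ ∑ j ∈ Finset.range N, ENNReal.ofReal a * M * ENNReal.ofReal ((b*τ)^j * ((N-1).choose j : ℝ))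
        + ∑ j ∈ Finset.range N, ENNReal.ofReal (b*τ) * S * M
            * ENNReal.ofReal ((b*τ)^j * ((N-1).choose j : ℝ)) :=
        add_le_add (Finset.sum_le_sum hPterm) (Finset.sum_le_sum hQterm)
    _ = (ENNReal.ofReal a + ENNReal.ofReal (b*τ) * S) * M
        * ∑ j ∈ Finset.range N, ENNReal.ofReal ((b*τ)^j * ((N-1).choose j : ℝ)) := by
        rw [← Finset.mul_sum, ← Finset.mul_sum, ← add_mul, add_mul (ENNReal.ofReal a) _ M]
    _ = (ENNReal.ofReal a + ENNReal.ofReal (b*τ) * S) * M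
        * ENNReal.ofReal ((1 + b*τ) ^ (N-1)) := by rw [hw]
end

section
/- Let N ∈ ℕ, a, b, c ∈ [0,∞), α ∈ ℝ, β ∈ [α,∞), p ∈ [1,∞), let f_n : [α,β] → [0,∞], n ∈ ℕ₀, be measurable, assume sup_{s ∈ [α,β]} f₀(s) < ∞, and assume for all n ∈ {1,2,…,N} and t ∈ [α,β] that f_n(t) ≤ a cⁿ + Σ_{ℓ=0}^{n−1} b c^{n−ℓ−1} (∫_t^β (f_ℓ(s))^p ds)^{1/p}. Then f_N(α) ≤ [ a + b(β−α)^{1/p} · sup_{s ∈ [α,β]} f₀(s) ] · [ max_{k ∈ {0,1,…,N}} c^{N−k}/(k!)^{1/p} ] · [ 1 + b(β−α)^{1/p} ]^{N−1}. -/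
open MeasureTheory ENNReal


lemma hockey (m k : ℕ) : ∑ i ∈ Finset.range m, i.choose k = m.choose (k+1) := by
  induction m with
  | zero => simp
  | succ m ih => rw [Finset.sum_range_succ, ih, Nat.choose_succ_succ, Nat.add_comm]

lemma mink {ι : Type*} (μ : Measure ℝ) {p : ℝ} (hp : 1 ≤ p) (s : Finset ι) (h : ι → ℝ → ℝ≥0∞)
    (hm : ∀ i, Measurable (h i)) :
    (∫⁻ x, (∑ i ∈ s, h i x) ^ p ∂μ) ^ (1/p) ≤ ∑ i ∈ s, (∫⁻ x, (h i x) ^ p ∂μ) ^ (1/p) := by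
  classical
  induction s using Finset.induction_on with
  | empty =>
    simp only [Finset.sum_empty]
    rw [ENNReal.zero_rpow_of_pos (lt_of_lt_of_le one_pos hp), lintegral_zero,
      ENNReal.zero_rpow_of_pos (by positivity)]
  | @insert i s hi ih =>
    simp only [Finset.sum_insert hi]
    calc (∫⁻ x, (h i x + ∑ j ∈ s, h j x) ^ p ∂μ) ^ (1/p)
        ≤ (∫⁻ x, (h i x) ^ p ∂μ) ^ (1/p) + (∫⁻ x, (∑ j ∈ s, h j x) ^ p ∂μ) ^ (1/p) :=
          ENNReal.lintegral_Lp_add_le (hm i).aemeasurable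
            (Finset.measurable_sum s (fun j _ => hm j)).aemeasurable hp
      _ ≤ _ := by gcongr

lemma integ (k : ℕ) {t β : ℝ} (h : t ≤ β) :
    ∫⁻ s in Set.Icc t β, ENNReal.ofReal ((β - s)^k / k.factorial) =
      ENNReal.ofReal ((β - t)^(k+1) / (k+1).factorial) := by
  have hcont : Continuous fun s : ℝ => (β - s)^k / (k.factorial : ℝ) := by continuity
  have hint : IntegrableOn (fun s : ℝ => (β - s)^k / (k.factorial : ℝ)) (Set.Icc t β) :=
    hcont.integrableOn_Icc
  rw [← ofReal_integral_eq_lintegral_ofReal hint ?_]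
  · congr 1
    rw [MeasureTheory.integral_Icc_eq_integral_Ioc, ← intervalIntegral.integral_of_le h]
    rw [intervalIntegral.integral_div]
    rw [intervalIntegral.integral_comp_sub_left (fun u : ℝ => u ^ k) β]
    simp only [sub_self, integral_pow, ne_eq]
    rw [Nat.factorial_succ]
    push_cast
    have : (k : ℝ) + 1 ≠ 0 := by positivity
    have : (k.factorial : ℝ) ≠ 0 := by positivity
    field_simp
    simp
    
  · filter_upwards [ae_restrict_mem measurableSet_Icc] with s hs
    have : 0 ≤ β - s := by linarith [hs.2]
    positivity

noncomputable def phi (β p : ℝ) (k : ℕ) (t : ℝ) : ℝ≥0∞ :=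
  ENNReal.ofReal ((β - t) ^ k / k.factorial) ^ (1/p)

noncomputable def gg (a b : ℝ) (M : ℝ≥0∞) (n k : ℕ) : ℝ≥0∞ :=
  if k = 0 then ENNReal.ofReal a
  else ENNReal.ofReal b ^ k *
    (ENNReal.ofReal a * ((n-1).choose k : ℕ) + M * (((n-1).choose (k-1) : ℕ) : ℝ≥0∞))

lemma phi_meas (β p : ℝ) (k : ℕ) : Measurable (phi β p k) := by
  unfold phi
  exact (ENNReal.measurable_ofReal.comp (by fun_prop)).pow_const _

lemma gg_ne_top (a b : ℝ) {M : ℝ≥0∞} (hM : M ≠ ⊤) (n k : ℕ) : gg a b M n k ≠ ⊤ := by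
  unfold gg
  split
  · exact ofReal_ne_top
  · exact ENNReal.mul_ne_top (by simp [ENNReal.pow_ne_top]) (by
      exact ENNReal.add_ne_top.2 ⟨ENNReal.mul_ne_top ofReal_ne_top (by simp),
        ENNReal.mul_ne_top hM (by simp)⟩)

lemma gg_zero_of_lt (a b : ℝ) (M : ℝ≥0∞) {n k : ℕ} (hk : n + 2 ≤ k) :
    gg a b (M) (n+1) k = 0 := by
  unfold gg
  rw [if_neg (by omega)]
  simp only [Nat.add_sub_cancel]
  rw [Nat.choose_eq_zero_of_lt (by omega), Nat.choose_eq_zero_of_lt (by omega)]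
  simp

lemma key
    (N : ℕ) (a b c : ℝ) (ha : 0 ≤ a) (hb : 0 ≤ b) (hc : 0 ≤ c)
    (α β : ℝ) (hαβ : α ≤ β) (p : ℝ) (hp : 1 ≤ p)
    (f : ℕ → ℝ → ℝ≥0∞)
    (hf0 : (⨆ s : Set.Icc α β, f 0 s.1) < ⊤)
    (hrec : ∀ n, 1 ≤ n → n ≤ N → ∀ t ∈ Set.Icc α β,
      f n t ≤ ENNReal.ofReal (a * c ^ n)
        + ∑ ℓ ∈ Finset.range n, ENNReal.ofReal (b * c ^ (n - ℓ - 1))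
              * (∫⁻ s in Set.Icc t β, (f ℓ s) ^ p) ^ (1 / p)) :
    ∀ n, 1 ≤ n → n ≤ N → ∀ t ∈ Set.Icc α β,
      f n t ≤ ∑ k ∈ Finset.range (n+1),
        gg a b (⨆ s : Set.Icc α β, f 0 s.1) n k * ENNReal.ofReal c ^ (n-k) * phi β p k t := by
  set M := ⨆ s : Set.Icc α β, f 0 s.1 with hMdef
  set A := ENNReal.ofReal a with hA
  set B := ENNReal.ofReal b with hB
  set C := ENNReal.ofReal c with hC
  have hMne : M ≠ ⊤ := hf0.ne
  have hp0 : (0:ℝ) < p := lt_of_lt_of_le one_pos hp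
  have hpne : p ≠ 0 := ne_of_gt hp0
  have hip : (0:ℝ) ≤ 1/p := by positivity
  intro n
  induction n using Nat.strong_induction_on with
  | _ n ih =>
  intro hn1 hnN t ht
  obtain ⟨m, rfl⟩ : ∃ m, n = m + 1 := ⟨n - 1, by omega⟩
  have htβ : t ≤ β := ht.2
  have hsub : Set.Icc t β ⊆ Set.Icc α β := Set.Icc_subset_Icc ht.1 le_rfl
  have hfM : ∀ s ∈ Set.Icc α β, f 0 s ≤ M := fun s hs =>
    le_iSup (fun x : Set.Icc α β => f 0 x.1) ⟨s, hs⟩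
  -- bound on the `ℓ = 0` integral
  have hI0 : (∫⁻ s in Set.Icc t β, (f 0 s) ^ p) ^ (1/p) ≤ M * phi β p 1 t := by
    have h1 : (∫⁻ s in Set.Icc t β, (f 0 s) ^ p) ≤ M ^ p * ENNReal.ofReal (β - t) := by
      calc ∫⁻ s in Set.Icc t β, (f 0 s) ^ p ≤ ∫⁻ _ in Set.Icc t β, M ^ p := by
            refine setLIntegral_mono measurable_const fun s hs => ?_
            exact ENNReal.rpow_le_rpow (hfM s (hsub hs)) hp0.le
        _ = M ^ p * ENNReal.ofReal (β - t) := by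
            rw [setLIntegral_const, Real.volume_Icc]
    calc (∫⁻ s in Set.Icc t β, (f 0 s) ^ p) ^ (1/p)
        ≤ (M ^ p * ENNReal.ofReal (β - t)) ^ (1/p) := ENNReal.rpow_le_rpow h1 hip
      _ = M * phi β p 1 t := by
          rw [ENNReal.mul_rpow_of_nonneg _ _ hip, ← ENNReal.rpow_mul,
            mul_one_div_cancel hpne, ENNReal.rpow_one]
          unfold phi
          norm_num
  -- generic computation of the integral of a constant times `phi k`
  have hterm : ∀ (X : ℝ≥0∞), X ≠ ⊤ → ∀ k : ℕ,
      (∫⁻ s in Set.Icc t β, (X * phi β p k s) ^ p) ^ (1/p) = X * phi β p (k+1) t := by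
    intro X hX k
    have hphi : ∀ s : ℝ, (phi β p k s) ^ p = ENNReal.ofReal ((β - s)^k / k.factorial) := by
      intro s
      unfold phi
      rw [← ENNReal.rpow_mul, one_div_mul_cancel hpne, ENNReal.rpow_one]
    have hXp : X ^ p ≠ ⊤ := ENNReal.rpow_ne_top_of_nonneg hp0.le hX
    calc (∫⁻ s in Set.Icc t β, (X * phi β p k s) ^ p) ^ (1/p)
        = (∫⁻ s in Set.Icc t β, X ^ p * ENNReal.ofReal ((β - s)^k / k.factorial)) ^ (1/p) := by
          congr 1
          refine lintegral_congr fun s => ?_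
          rw [ENNReal.mul_rpow_of_nonneg _ _ hp0.le, hphi s]
      _ = (X ^ p * ENNReal.ofReal ((β - t)^(k+1) / (k+1).factorial)) ^ (1/p) := by
          rw [lintegral_const_mul' _ _ hXp, integ k htβ]
      _ = X * phi β p (k+1) t := by
          rw [ENNReal.mul_rpow_of_nonneg _ _ hip, ← ENNReal.rpow_mul,
            mul_one_div_cancel hpne, ENNReal.rpow_one]
          rfl
  -- bound on the `ℓ = i+1` integrals
  have hIsucc : ∀ i, i < m → (∫⁻ s in Set.Icc t β, (f (i+1) s) ^ p) ^ (1/p)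
      ≤ ∑ k ∈ Finset.range (i+2), gg a b M (i+1) k * C ^ (i+1-k) * phi β p (k+1) t := by
    intro i him
    have hIH : ∀ s ∈ Set.Icc t β, f (i+1) s ≤
        ∑ k ∈ Finset.range (i+2), gg a b M (i+1) k * C ^ (i+1-k) * phi β p k s := by
      intro s hs
      exact ih (i+1) (by omega) (by omega) (by omega) s (hsub hs)
    calc (∫⁻ s in Set.Icc t β, (f (i+1) s) ^ p) ^ (1/p)
        ≤ (∫⁻ s in Set.Icc t β,
            (∑ k ∈ Finset.range (i+2), gg a b M (i+1) k * C ^ (i+1-k) * phi β p k s) ^ p) ^ (1/p) := by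
          refine ENNReal.rpow_le_rpow ?_ hip
          refine setLIntegral_mono ((Finset.measurable_sum _ fun k _ =>
            (phi_meas β p k).const_mul _).pow_const p) fun s hs => ?_
          exact ENNReal.rpow_le_rpow (hIH s hs) hp0.le
      _ ≤ ∑ k ∈ Finset.range (i+2),
            (∫⁻ s in Set.Icc t β, (gg a b M (i+1) k * C ^ (i+1-k) * phi β p k s) ^ p) ^ (1/p) :=
          mink _ hp _ _ (fun k => (phi_meas β p k).const_mul _)
      _ = ∑ k ∈ Finset.range (i+2), gg a b M (i+1) k * C ^ (i+1-k) * phi β p (k+1) t := by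
          refine Finset.sum_congr rfl fun k _ => ?_
          have := hterm (gg a b M (i+1) k * C ^ (i+1-k))
            (ENNReal.mul_ne_top (gg_ne_top a b hMne _ _) (by simp [hC, ENNReal.pow_ne_top])) k
          simpa [mul_assoc] using this
  -- coefficient identity
  have coeff : ∀ k, (∑ i ∈ Finset.range m, B * gg a b M (i+1) k)
      + (if k = 0 then B * M else 0) = gg a b M (m+1) (k+1) := by
    intro k
    have hg0 : ∀ i : ℕ, gg a b M i 0 = A := fun i => by unfold gg; rw [if_pos rfl]
    cases k with
    | zero =>
      rw [if_pos rfl]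
      have hg1 : gg a b M (m+1) 1 = B * (A * m + M) := by
        unfold gg
        rw [if_neg one_ne_zero]
        simp [Nat.choose_one_right, hA, hB]
      simp_rw [hg0]
      rw [Finset.sum_const, Finset.card_range, nsmul_eq_mul, hg1]
      ring
    | succ k' =>
      rw [if_neg (Nat.succ_ne_zero k'), add_zero]
      have hgmk : gg a b M (m+1) (k'+2)
          = B ^ (k'+2) * (A * (m.choose (k'+2) : ℕ) + M * ((m.choose (k'+1) : ℕ) : ℝ≥0∞)) := by
        unfold gg
        rw [if_neg (Nat.succ_ne_zero (k'+1))]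
        simp [hA, hB]
      have hgik : ∀ i : ℕ, gg a b M (i+1) (k'+1)
          = B ^ (k'+1) * (A * (i.choose (k'+1) : ℕ) + M * ((i.choose k' : ℕ) : ℝ≥0∞)) := by
        intro i
        unfold gg
        rw [if_neg (Nat.succ_ne_zero k')]
        simp [hA, hB]
      have h1 : ((m.choose (k'+2) : ℕ) : ℝ≥0∞) = ∑ i ∈ Finset.range m, ((i.choose (k'+1) : ℕ) : ℝ≥0∞) := by
        rw [← hockey m (k'+1)]; push_cast; ring
      have h2 : ((m.choose (k'+1) : ℕ) : ℝ≥0∞) = ∑ i ∈ Finset.range m, ((i.choose k' : ℕ) : ℝ≥0∞) := by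
        rw [← hockey m k']; push_cast; ring
      rw [hgmk, h1, h2]
      simp_rw [hgik]
      rw [Finset.mul_sum, Finset.mul_sum, ← Finset.sum_add_distrib, Finset.mul_sum]
      refine Finset.sum_congr rfl fun i _ => ?_
      ring
  -- main chain
  calc f (m+1) t
      ≤ ENNReal.ofReal (a * c ^ (m+1)) + ∑ ℓ ∈ Finset.range (m+1),
          ENNReal.ofReal (b * c ^ (m+1-ℓ-1))
            * (∫⁻ s in Set.Icc t β, (f ℓ s) ^ p) ^ (1/p) :=
        hrec (m+1) (by omega) hnN t ht
    _ = A * C ^ (m+1) + ∑ ℓ ∈ Finset.range (m+1),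
          (B * C ^ (m-ℓ)) * (∫⁻ s in Set.Icc t β, (f ℓ s) ^ p) ^ (1/p) := by
        rw [ENNReal.ofReal_mul ha, ENNReal.ofReal_pow hc]
        congr 1
        refine Finset.sum_congr rfl fun ℓ hℓ => ?_
        have he : m + 1 - ℓ - 1 = m - ℓ := by omega
        rw [he, ENNReal.ofReal_mul hb, ENNReal.ofReal_pow hc]
    _ = A * C ^ (m+1) + (∑ i ∈ Finset.range m,
          (B * C ^ (m-(i+1))) * (∫⁻ s in Set.Icc t β, (f (i+1) s) ^ p) ^ (1/p)
          + (B * C ^ (m-0)) * (∫⁻ s in Set.Icc t β, (f 0 s) ^ p) ^ (1/p)) := by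
        rw [Finset.sum_range_succ']
    _ ≤ A * C ^ (m+1) + (∑ i ∈ Finset.range m,
          (B * C ^ (m-(i+1))) * (∑ k ∈ Finset.range (i+2),
              gg a b M (i+1) k * C ^ (i+1-k) * phi β p (k+1) t)
          + (B * C ^ (m-0)) * (M * phi β p 1 t)) := by
        refine add_le_add le_rfl (add_le_add (Finset.sum_le_sum fun i hi => ?_) ?_)
        · exact mul_le_mul_right (hIsucc i (Finset.mem_range.1 hi)) _
        · exact mul_le_mul_right hI0 _
    _ = ∑ k ∈ Finset.range (m+2), gg a b M (m+1) k * C ^ (m+1-k) * phi β p k t := by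
        rw [Finset.sum_range_succ']
        have hgg0 : gg a b M (m+1) 0 = A := by unfold gg; rw [if_pos rfl]
        have hphi0 : phi β p 0 t = 1 := by unfold phi; norm_num
        rw [hgg0, hphi0, mul_one, Nat.sub_zero]
        -- transform the double sum
        have hinner : ∀ i ∈ Finset.range m,
            (B * C ^ (m-(i+1))) * (∑ k ∈ Finset.range (i+2),
              gg a b M (i+1) k * C ^ (i+1-k) * phi β p (k+1) t)
            = ∑ k ∈ Finset.range (m+1), (B * gg a b M (i+1) k) * (C ^ (m-k) * phi β p (k+1) t) := by
          intro i hi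
          have him : i < m := Finset.mem_range.1 hi
          rw [Finset.mul_sum]
          rw [Finset.sum_subset (Finset.range_subset_range.2 (by omega : i+2 ≤ m+1))]
          · refine Finset.sum_congr rfl fun k hk => ?_
            by_cases hki : k ≤ i + 1
            · have : C ^ (m-(i+1)) * C ^ (i+1-k) = C ^ (m-k) := by
                rw [← pow_add, (by omega : m - (i+1) + (i+1-k) = m - k)]
              calc (B * C ^ (m-(i+1))) * (gg a b M (i+1) k * C ^ (i+1-k) * phi β p (k+1) t)
                  = (B * gg a b M (i+1) k) * ((C ^ (m-(i+1)) * C ^ (i+1-k)) * phi β p (k+1) t) := by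
                    ring
                _ = (B * gg a b M (i+1) k) * (C ^ (m-k) * phi β p (k+1) t) := by rw [this]
            · rw [gg_zero_of_lt a b M (by omega)]
              simp
          · intro k hk hki
            simp only [Finset.mem_range] at hki
            rw [gg_zero_of_lt a b M (by omega : i + 2 ≤ k)]
            simp
        rw [Finset.sum_congr rfl hinner, Finset.sum_comm]
        simp only [Nat.sub_zero, Nat.succ_sub_succ_eq_sub]
        have hMterm : B * C ^ m * (M * phi β p 1 t)
            = ∑ k ∈ Finset.range (m+1),
                (if k = 0 then B * M else 0) * (C ^ (m-k) * phi β p (k+1) t) := by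
          rw [Finset.sum_eq_single 0]
          · norm_num; ring
          · intro k hk hk0; rw [if_neg hk0, zero_mul]
          · intro h; exact absurd (Finset.mem_range.2 (by omega)) h
        have hsums : (∑ k ∈ Finset.range (m+1), ∑ i ∈ Finset.range m,
              B * gg a b M (i+1) k * (C ^ (m-k) * phi β p (k+1) t))
              + B * C ^ m * (M * phi β p 1 t)
            = ∑ k ∈ Finset.range (m+1),
                gg a b M (m+1) (k+1) * C ^ (m-k) * phi β p (k+1) t := by
          rw [hMterm, ← Finset.sum_add_distrib]
          refine Finset.sum_congr rfl fun k hk => ?_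
          rw [← coeff k]
          simp only [add_mul, Finset.sum_mul, mul_assoc]
        rw [hsums, add_comm]

/-- Gronwall-type inequality, Lemma `g090a`.
Let `N ∈ ℕ`, `a, b, c ∈ [0,∞)`, `α ∈ ℝ`, `β ∈ [α,∞)`, `p ∈ [1,∞)`, let
`f_n : [α,β] → [0,∞]`, `n ∈ ℕ₀`, be measurable, assume `sup_{s∈[α,β]} f₀(s) < ∞`,
and assume for all `n ∈ {1,…,N}`, `t ∈ [α,β]` that
`f_n(t) ≤ a cⁿ + Σ_{ℓ=0}^{n-1} b c^{n-ℓ-1} (∫_t^β (f_ℓ(s))^p ds)^{1/p}`.  Then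
`f_N(α) ≤ [a + b (β-α)^{1/p} sup_{s∈[α,β]} f₀(s)]
          · [max_{0≤k≤N} c^{N-k}/(k!)^{1/p}] · [1 + b (β-α)^{1/p}]^{N-1}`. -/
theorem stmt_16
    (N : ℕ) (hN : 1 ≤ N)
    (a b c : ℝ) (ha : 0 ≤ a) (hb : 0 ≤ b) (hc : 0 ≤ c)
    (α β : ℝ) (hαβ : α ≤ β)
    (p : ℝ) (hp : 1 ≤ p)
    (f : ℕ → ℝ → ℝ≥0∞)
    (hfmeas : ∀ n, Measurable fun s : Set.Icc α β => f n s.1)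
    (hf0 : (⨆ s : Set.Icc α β, f 0 s.1) < ⊤)
    (hrec : ∀ n, 1 ≤ n → n ≤ N → ∀ t ∈ Set.Icc α β,
      f n t ≤ ENNReal.ofReal (a * c ^ n)
        + ∑ ℓ ∈ Finset.range n,
            ENNReal.ofReal (b * c ^ (n - ℓ - 1))
              * (∫⁻ s in Set.Icc t β, (f ℓ s) ^ p) ^ (1 / p)) :
    f N α ≤
      (ENNReal.ofReal a
          + ENNReal.ofReal (b * (β - α) ^ (1 / p)) * (⨆ s : Set.Icc α β, f 0 s.1))
        * (⨆ k ∈ Finset.range (N + 1),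
            ENNReal.ofReal (c ^ (N - k) / ((k.factorial : ℝ) ^ (1 / p))))
        * ENNReal.ofReal ((1 + b * (β - α) ^ (1 / p)) ^ (N - 1)) := by
  have hp0 : (0:ℝ) < p := lt_of_lt_of_le one_pos hp
  have hpne : p ≠ 0 := ne_of_gt hp0
  have hip : (0:ℝ) ≤ 1/p := by positivity
  have h0 : (0:ℝ) ≤ β - α := sub_nonneg.2 hαβ
  have hT' : (0:ℝ) ≤ (β - α) ^ (1/p) := Real.rpow_nonneg h0 _
  set M := ⨆ s : Set.Icc α β, f 0 s.1 with hMdef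
  set A := ENNReal.ofReal a with hA
  set B := ENNReal.ofReal b with hB
  set C := ENNReal.ofReal c with hC
  set T := ENNReal.ofReal ((β - α) ^ (1/p)) with hT
  set K := ⨆ k ∈ Finset.range (N + 1),
      ENNReal.ofReal (c ^ (N - k) / ((k.factorial : ℝ) ^ (1 / p))) with hK
  have hαIcc : α ∈ Set.Icc α β := ⟨le_rfl, hαβ⟩
  have hkey := key N a b c ha hb hc α β hαβ p hp f hf0 hrec N hN le_rfl α hαIcc
  -- rewrite the RHS
  have hRHS1 : ENNReal.ofReal (b * (β - α) ^ (1/p)) = B * T := ENNReal.ofReal_mul hb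
  have hRHS2 : ENNReal.ofReal ((1 + b * (β - α) ^ (1/p)) ^ (N - 1)) = (1 + B * T) ^ (N - 1) := by
    rw [ENNReal.ofReal_pow (by positivity)]
    congr 1
    rw [ENNReal.ofReal_add zero_le_one (by positivity), ENNReal.ofReal_one, ENNReal.ofReal_mul hb]
  rw [hRHS1, hRHS2]
  -- step 1 : pointwise bound at `t = α`
  have step1 : ∀ k ∈ Finset.range (N+1), C ^ (N-k) * phi β p k α ≤ K * T ^ k := by
    intro k hk
    have h1 : phi β p k α = ENNReal.ofReal (((β-α)^k / k.factorial) ^ (1/p)) := by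
      unfold phi
      rw [ENNReal.ofReal_rpow_of_nonneg (by positivity) hip]
    have h2 : ((β-α)^k / (k.factorial:ℝ)) ^ (1/p)
        = (1/(k.factorial:ℝ)^(1/p)) * ((β-α)^(1/p))^k := by
      rw [Real.div_rpow (by positivity) (by positivity)]
      rw [← Real.rpow_natCast (β-α) k, ← Real.rpow_mul h0, mul_comm (k:ℝ) (1/p),
        Real.rpow_mul h0, Real.rpow_natCast]
      ring
    calc C ^ (N-k) * phi β p k α
        = ENNReal.ofReal (c^(N-k) * (((β-α)^k / k.factorial) ^ (1/p))) := by
          rw [h1, hC, ← ENNReal.ofReal_pow hc, ← ENNReal.ofReal_mul (by positivity)]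
      _ = ENNReal.ofReal (c^(N-k) / (k.factorial:ℝ)^(1/p)) * T ^ k := by
          rw [h2, hT, ← ENNReal.ofReal_pow hT', ← ENNReal.ofReal_mul (by positivity)]
          congr 1
          ring
      _ ≤ K * T ^ k := by
          refine mul_le_mul_left ?_ _
          exact le_iSup₂ (f := fun k (_ : k ∈ Finset.range (N+1)) =>
            ENNReal.ofReal (c ^ (N - k) / ((k.factorial : ℝ) ^ (1 / p)))) k hk
  obtain ⟨m, rfl⟩ : ∃ m, N = m + 1 := ⟨N - 1, by omega⟩
  -- step 3 : the sum of coefficients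
  have step3 : ∑ k ∈ Finset.range (m+2), gg a b M (m+1) k * T^k = (A + B*M*T) * (1+B*T)^m := by
    have hgsucc : ∀ j : ℕ, gg a b M (m+1) (j+1)
        = B^(j+1) * (A * ((m.choose (j+1) : ℕ) : ℝ≥0∞) + M * ((m.choose j : ℕ) : ℝ≥0∞)) := by
      intro j; unfold gg; rw [if_neg (Nat.succ_ne_zero j)]; simp [hA, hB]
    have hgg0 : gg a b M (m+1) 0 = A := by unfold gg; rw [if_pos rfl]
    have expand : (1 + B*T)^m = ∑ j ∈ Finset.range (m+1), (B*T)^j * ((m.choose j : ℕ) : ℝ≥0∞) := by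
      rw [add_comm, add_pow]
      simp
    rw [Finset.sum_range_succ', hgg0, expand, pow_zero, mul_one, Finset.mul_sum]
    simp_rw [hgsucc]
    have lhsA : ∑ j ∈ Finset.range (m+1),
          B^(j+1) * (A * ((m.choose (j+1):ℕ):ℝ≥0∞) + M * ((m.choose j : ℕ):ℝ≥0∞)) * T^(j+1)
        = (∑ j ∈ Finset.range (m+1), A * ((m.choose (j+1):ℕ):ℝ≥0∞) * (B*T)^(j+1))
          + ∑ j ∈ Finset.range (m+1), M * ((m.choose j:ℕ):ℝ≥0∞) * B^(j+1) * T^(j+1) := by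
      rw [← Finset.sum_add_distrib]
      exact Finset.sum_congr rfl fun j _ => by ring
    have rhsA : ∑ j ∈ Finset.range (m+1), (A + B*M*T) * ((B*T)^j * ((m.choose j:ℕ):ℝ≥0∞))
        = (∑ j ∈ Finset.range (m+1), A * ((m.choose j:ℕ):ℝ≥0∞) * (B*T)^j)
          + ∑ j ∈ Finset.range (m+1), M * ((m.choose j:ℕ):ℝ≥0∞) * B^(j+1) * T^(j+1) := by
      rw [← Finset.sum_add_distrib]
      exact Finset.sum_congr rfl fun j _ => by ring
    rw [lhsA, rhsA, add_right_comm]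
    congr 1
    rw [Finset.sum_range_succ' (fun j => A * ((m.choose j:ℕ):ℝ≥0∞) * (B*T)^j) m,
      Finset.sum_range_succ]
    simp [Nat.choose_succ_self]
  -- chain everything
  calc f (m+1) α
      ≤ ∑ k ∈ Finset.range (m+2), gg a b M (m+1) k * C ^ (m+1-k) * phi β p k α := hkey
    _ ≤ ∑ k ∈ Finset.range (m+2), gg a b M (m+1) k * (K * T^k) := by
        refine Finset.sum_le_sum fun k hk => ?_
        rw [mul_assoc]
        exact mul_le_mul_right (step1 k hk) _
    _ = K * ∑ k ∈ Finset.range (m+2), gg a b M (m+1) k * T^k := by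
        rw [Finset.mul_sum]
        exact Finset.sum_congr rfl fun k _ => by ring
    _ = (A + B * T * M) * K * (1 + B*T)^(m+1-1) := by
        rw [step3]
        have : m + 1 - 1 = m := rfl
        rw [this]
        ring
end

section
/- Let M, N ∈ ℕ, T ∈ (0,∞), τ ∈ [0,T], a, b ∈ [0,∞), p ∈ [1,∞), let f_n : [τ,T] → [0,∞], n ∈ ℕ₀, be measurable, assume sup_{s ∈ [τ,T]} f₀(s) < ∞, and assume for all n ∈ {1,2,…,N} and t ∈ [τ,T] that f_n(t) ≤ a/M^{n/2} + Σ_{ℓ=0}^{n−1} (b/M^{(n−ℓ−1)/2}) (∫_t^T (f_ℓ(s))^p ds)^{1/p}. Then f_N(τ) ≤ [ a + b(T−τ)^{1/p} · sup_{s ∈ [τ,T]} f₀(s) ] · exp(M^{p/2}/p) · M^{−N/2} · [ 1 + b(T−τ)^{1/p} ]^{N−1}. -/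
open MeasureTheory ENNReal

section auxx
open Real

lemma aux_exp_int (t T c : ℝ) (htT : t ≤ T) (hc : 0 < c) :
    ∫ s in t..T, Real.exp (c * (T - s)) = (Real.exp (c * (T - t)) - 1) / c := by
  have hder : ∀ s ∈ Set.uIcc t T,
      HasDerivAt (fun s => Real.exp (c * (T - s)) / (-c)) (Real.exp (c * (T - s))) s := by
    intro s _
    have h1 : HasDerivAt (fun s : ℝ => T - s) (-1) s := (hasDerivAt_id s).const_sub T
    have h2 : HasDerivAt (fun s : ℝ => c * (T - s)) (c * -1) s := h1.const_mul c
    have h3 := (Real.hasDerivAt_exp (c * (T - s))).comp s h2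
    have h4 := h3.div_const (-c)
    convert h4 using 1
    · rfl
    · rfl
    · rfl
    · rw [mul_neg_one, mul_div_assoc, div_self (neg_ne_zero.mpr hc.ne'), mul_one]
  have hint : IntervalIntegrable (fun s => Real.exp (c * (T - s))) volume t T := by
    apply Continuous.intervalIntegrable; continuity
  rw [intervalIntegral.integral_eq_sub_of_hasDerivAt hder hint]
  rw [sub_self, mul_zero, Real.exp_zero, div_sub_div_same, div_neg]
  ring

lemma aux_int (p : ℝ) (hp : 1 ≤ p) (t T c K : ℝ) (htT : t ≤ T) (hc : 0 < c) (hK : 0 ≤ K)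
    (g : ℝ → ℝ≥0∞)
    (hg : ∀ s ∈ Set.Icc t T, g s ≤ ENNReal.ofReal (K * Real.exp (c * (T - s)))) :
    (∫⁻ s in Set.Icc t T, (g s) ^ p) ^ (1/p)
      ≤ ENNReal.ofReal (K * Real.exp (c * (T - t)) * (p * c) ^ (-(1:ℝ)/p)) := by
  have hp0 : (0:ℝ) < p := lt_of_lt_of_le one_pos hp
  have hpc : (0:ℝ) < p * c := mul_pos hp0 hc
  have step1 : ∫⁻ s in Set.Icc t T, (g s) ^ p
      ≤ ∫⁻ s in Set.Icc t T, ENNReal.ofReal (K ^ p * Real.exp (p * c * (T - s))) := by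
    apply setLIntegral_mono' measurableSet_Icc
    intro s hs
    calc (g s) ^ p ≤ (ENNReal.ofReal (K * Real.exp (c * (T - s)))) ^ p :=
          ENNReal.rpow_le_rpow (hg s hs) hp0.le
      _ = ENNReal.ofReal ((K * Real.exp (c * (T - s))) ^ p) := by
          rw [← ENNReal.ofReal_rpow_of_nonneg (by positivity) hp0.le]
      _ = ENNReal.ofReal (K ^ p * Real.exp (p * c * (T - s))) := by
          rw [Real.mul_rpow hK (Real.exp_nonneg _), ← Real.exp_mul]
          ring_nf
  have hcont : Continuous fun s : ℝ => K ^ p * Real.exp (p * c * (T - s)) := by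
    continuity
  have step2 : ∫⁻ s in Set.Icc t T, ENNReal.ofReal (K ^ p * Real.exp (p * c * (T - s)))
      ≤ ENNReal.ofReal (K ^ p * Real.exp (p * c * (T - t)) / (p * c)) := by
    rw [← ofReal_integral_eq_lintegral_ofReal
        (hcont.integrableOn_Icc) (ae_of_all _ (fun s => by positivity))]
    apply ENNReal.ofReal_le_ofReal
    rw [MeasureTheory.integral_Icc_eq_integral_Ioc, ← intervalIntegral.integral_of_le htT,
      intervalIntegral.integral_const_mul, aux_exp_int t T (p*c) htT hpc, mul_div_assoc]
    gcongr
    linarith [Real.exp_pos (p * c * (T - t))]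
  have step3 : (∫⁻ s in Set.Icc t T, (g s) ^ p) ^ (1/p)
      ≤ (ENNReal.ofReal (K ^ p * Real.exp (p * c * (T - t)) / (p * c))) ^ (1/p) :=
    ENNReal.rpow_le_rpow (step1.trans step2) (by positivity)
  refine step3.trans (le_of_eq ?_)
  rw [ENNReal.ofReal_rpow_of_nonneg (by positivity) (by positivity)]
  congr 1
  rw [Real.div_rpow (by positivity) hpc.le, Real.mul_rpow (by positivity) (Real.exp_nonneg _),
    ← Real.rpow_mul hK, mul_one_div_cancel hp0.ne', Real.rpow_one, ← Real.exp_mul,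
    div_eq_mul_inv, ← Real.rpow_neg hpc.le, neg_div,
    show p * c * (T - t) * (1/p) = c * (T - t) by field_simp]

lemma aux_real (M : ℕ) (hM : 1 ≤ M) (p a b Sr δ e : ℝ)
    (hp : 1 ≤ p) (ha : 0 ≤ a) (hb : 0 ≤ b) (hSr : 0 ≤ Sr) (hδ : 0 < δ) (he : 1 ≤ e)
    (m : ℕ) :
    a / (M : ℝ) ^ (((m + 1 : ℕ) : ℝ) / 2)
      + ∑ ℓ ∈ Finset.range (m + 1),
          b / (M : ℝ) ^ (((m + 1 - ℓ - 1 : ℕ) : ℝ) / 2)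
            * ((if ℓ = 0 then Sr
                else (a + b * δ ^ (1/p) * Sr) * (M : ℝ) ^ (-(ℓ : ℝ) / 2)
                      * (1 + b * δ ^ (1/p)) ^ (ℓ - 1)) * e
               * ((M : ℝ) ^ (-(1 : ℝ) / 2) * δ ^ (1/p)))
    ≤ (a + b * δ ^ (1/p) * Sr) * (M : ℝ) ^ (-((m + 1 : ℕ) : ℝ) / 2)
        * (1 + b * δ ^ (1/p)) ^ m * e := by
  have hMn : (0:ℝ) < (M:ℝ) := by
    have : 0 < M := hM
    exact_mod_cast this
  set q : ℝ := (M:ℝ) ^ (-(1:ℝ)/2) with hqdef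
  have hq0 : 0 < q := Real.rpow_pos_of_pos hMn _
  have hq : ∀ k : ℕ, (M:ℝ) ^ (-(k:ℝ)/2) = q ^ k := by
    intro k
    rw [show (-(k:ℝ)/2) = (-(1:ℝ)/2) * (k:ℝ) by ring, Real.rpow_mul hMn.le,
      Real.rpow_natCast, hqdef]
  have hdiv : ∀ (x : ℝ) (k : ℕ), x / (M:ℝ) ^ ((k:ℝ)/2) = x * q ^ k := by
    intro x k
    rw [div_eq_mul_inv, ← Real.rpow_neg hMn.le, ← neg_div, hq]
  have hterm : ∀ i ∈ Finset.range m,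
      b / (M : ℝ) ^ (((m + 1 - (i+1) - 1 : ℕ) : ℝ) / 2)
        * ((if i + 1 = 0 then Sr
            else (a + b * δ ^ (1/p) * Sr) * (M : ℝ) ^ (-((i+1 : ℕ) : ℝ) / 2)
                  * (1 + b * δ ^ (1/p)) ^ (i + 1 - 1)) * e
           * (q * δ ^ (1/p)))
      = ((a + b * δ ^ (1/p) * Sr) * (b * δ ^ (1/p)) * q ^ (m+1) * e)
          * (1 + b * δ ^ (1/p)) ^ i := by
    intro i hi
    have him : i < m := Finset.mem_range.mp hi
    rw [if_neg (Nat.succ_ne_zero i), Nat.add_sub_cancel, hdiv, hq]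
    have hpow : q ^ (m + 1 - (i+1) - 1) * q ^ (i+1) * q = q ^ (m+1) := by
      rw [← pow_add, ← pow_succ]
      congr 1
      omega
    linear_combination
      (b * δ ^ (1/p) * (a + b * δ ^ (1/p) * Sr) * (1 + b * δ ^ (1/p)) ^ i * e) * hpow
  rw [Finset.sum_range_succ', Finset.sum_congr rfl hterm, ← Finset.mul_sum,
    hdiv a (m+1), hq (m+1)]
  simp only [eq_self_iff_true, if_true, Nat.sub_zero, Nat.add_sub_cancel]
  rw [hdiv b m]
  have hgeom : (b * δ ^ (1/p)) * ∑ i ∈ Finset.range m, (1 + b * δ ^ (1/p)) ^ i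
      = (1 + b * δ ^ (1/p)) ^ m - 1 := by
    have h := geom_sum_mul (1 + b * δ ^ (1/p)) m
    linear_combination h
  have hexp : ((a + b * δ ^ (1/p) * Sr) * (b * δ ^ (1/p)) * q ^ (m+1) * e)
        * ∑ i ∈ Finset.range m, (1 + b * δ ^ (1/p)) ^ i
      = (a + b * δ ^ (1/p) * Sr) * q ^ (m+1) * e * ((1 + b * δ ^ (1/p)) ^ m - 1) := by
    linear_combination ((a + b * δ ^ (1/p) * Sr) * q ^ (m+1) * e) * hgeom
  have h2 : b * q ^ m * (Sr * e * (q * δ ^ (1/p)))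
      = Sr * (b * δ ^ (1/p)) * q ^ (m+1) * e := by
    rw [pow_succ]; ring
  nlinarith [hexp, h2,
    mul_nonneg (mul_nonneg ha (pow_pos hq0 (m+1)).le) (sub_nonneg.mpr he)]

end auxx

/-- Gronwall-type inequality, Lemma `g09`.
Let `M, N ∈ ℕ`, `T ∈ (0,∞)`, `τ ∈ [0,T]`, `a, b ∈ [0,∞)`, `p ∈ [1,∞)`, let
`f_n : [τ,T] → [0,∞]`, `n ∈ ℕ₀`, be measurable, assume `sup_{s∈[τ,T]} f₀(s) < ∞`,
and assume for all `n ∈ {1,…,N}`, `t ∈ [τ,T]` that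
`f_n(t) ≤ a/M^{n/2} + Σ_{ℓ=0}^{n-1} (b/M^{(n-ℓ-1)/2}) (∫_t^T (f_ℓ(s))^p ds)^{1/p}`.
Then `f_N(τ) ≤ [a + b (T-τ)^{1/p} sup_{s∈[τ,T]} f₀(s)] · exp(M^{p/2}/p) · M^{-N/2}
               · [1 + b (T-τ)^{1/p}]^{N-1}`. -/
theorem stmt_17
    (M N : ℕ) (hM : 1 ≤ M) (hN : 1 ≤ N)
    (T : ℝ) (hT : 0 < T) (τ : ℝ) (hτ : τ ∈ Set.Icc 0 T)
    (a b : ℝ) (ha : 0 ≤ a) (hb : 0 ≤ b)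
    (p : ℝ) (hp : 1 ≤ p)
    (f : ℕ → ℝ → ℝ≥0∞)
    (hfmeas : ∀ n, Measurable fun s : Set.Icc τ T => f n s.1)
    (hf0 : (⨆ s : Set.Icc τ T, f 0 s.1) < ⊤)
    (hrec : ∀ n, 1 ≤ n → n ≤ N → ∀ t ∈ Set.Icc τ T,
      f n t ≤ ENNReal.ofReal (a / (M : ℝ) ^ ((n : ℝ) / 2))
        + ∑ ℓ ∈ Finset.range n,
            ENNReal.ofReal (b / (M : ℝ) ^ (((n - ℓ - 1 : ℕ) : ℝ) / 2))
              * (∫⁻ s in Set.Icc t T, (f ℓ s) ^ p) ^ (1 / p)) :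
    f N τ ≤
      (ENNReal.ofReal a
          + ENNReal.ofReal (b * (T - τ) ^ (1 / p)) * (⨆ s : Set.Icc τ T, f 0 s.1))
        * ENNReal.ofReal (Real.exp ((M : ℝ) ^ (p / 2) / p))
        * ENNReal.ofReal ((M : ℝ) ^ (-(N : ℝ) / 2))
        * ENNReal.ofReal ((1 + b * (T - τ) ^ (1 / p)) ^ (N - 1)) := by
  have hp0 : (0:ℝ) < p := lt_of_lt_of_le one_pos hp
  have hMn : (0:ℝ) < (M:ℝ) := by
    have : 0 < M := hM
    exact_mod_cast this
  rcases eq_or_lt_of_le hτ.2 with hτT | hτT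
  · -- degenerate case τ = T
    subst hτT
    have h := hrec N hN le_rfl τ ⟨le_rfl, le_rfl⟩
    have hzero : ∀ ℓ, (∫⁻ s in Set.Icc τ τ, (f ℓ s) ^ p) = 0 := fun ℓ =>
      setLIntegral_measure_zero _ _ (by simp [Real.volume_Icc])
    simp only [hzero, ENNReal.zero_rpow_of_pos (by positivity : (0:ℝ) < 1/p), mul_zero,
      Finset.sum_const_zero, add_zero] at h
    refine h.trans ?_
    simp only [sub_self, Real.zero_rpow (by positivity : (1:ℝ)/p ≠ 0), mul_zero,
      ENNReal.ofReal_zero, zero_mul, add_zero, one_pow, ENNReal.ofReal_one, mul_one]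
    rw [← ENNReal.ofReal_mul ha, ← ENNReal.ofReal_mul (by positivity)]
    apply ENNReal.ofReal_le_ofReal
    rw [div_eq_mul_inv, ← Real.rpow_neg hMn.le, ← neg_div]
    nlinarith [mul_nonneg (mul_nonneg ha (Real.rpow_pos_of_pos hMn (-(N:ℝ)/2)).le)
      (sub_nonneg.mpr (Real.one_le_exp (by positivity : (0:ℝ) ≤ (M:ℝ)^(p/2)/p)))]
  · -- main case τ < T
    have hδ : (0:ℝ) < T - τ := sub_pos.mpr hτT
    set Sr : ℝ := (⨆ s : Set.Icc τ T, f 0 s.1).toReal with hSrdef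
    have hSr : 0 ≤ Sr := ENNReal.toReal_nonneg
    have hS : (⨆ s : Set.Icc τ T, f 0 s.1) = ENNReal.ofReal Sr :=
      (ENNReal.ofReal_toReal hf0.ne).symm
    have hf0b : ∀ s ∈ Set.Icc τ T, f 0 s ≤ ENNReal.ofReal Sr := by
      intro s hs
      rw [← hS]
      exact le_iSup (fun s : Set.Icc τ T => f 0 s.1) (⟨s, hs⟩ : Set.Icc τ T)
    have hβ : (0:ℝ) ≤ b * (T - τ) ^ (1/p) := mul_nonneg hb (Real.rpow_nonneg hδ.le _)
    have hCr : (0:ℝ) ≤ a + b * (T - τ) ^ (1/p) * Sr := add_nonneg ha (mul_nonneg hβ hSr)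
    set α : ℝ := (M:ℝ) ^ (p/2) / (p * (T - τ)) with hαdef
    have hα : 0 < α := div_pos (Real.rpow_pos_of_pos hMn _) (mul_pos hp0 hδ)
    have hpa : (p * α) ^ (-(1:ℝ)/p) = (M:ℝ) ^ (-(1:ℝ)/2) * (T - τ) ^ (1/p) := by
      rw [hαdef, show p * ((M:ℝ) ^ (p/2) / (p * (T - τ))) = (M:ℝ) ^ (p/2) / (T - τ) by
        field_simp]
      have h1 : (0:ℝ) < (M:ℝ) ^ (p/2) / (T - τ) :=
        div_pos (Real.rpow_pos_of_pos hMn _) hδ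
      rw [show (-(1:ℝ)/p) = -(1/p) by ring, Real.rpow_neg h1.le,
        Real.div_rpow (Real.rpow_pos_of_pos hMn _).le hδ.le, ← Real.rpow_mul hMn.le,
        show p/2 * (1/p) = (1:ℝ)/2 by field_simp, inv_div, div_eq_mul_inv,
        ← Real.rpow_neg hMn.le, show (-(1:ℝ)/2) = -(1/2:ℝ) by norm_num, mul_comm]
    -- nonnegativity of the coefficients
    have hKnonneg : ∀ ℓ : ℕ, (0:ℝ) ≤ (if ℓ = 0 then Sr
        else (a + b * (T - τ) ^ (1/p) * Sr) * (M:ℝ) ^ (-(ℓ:ℝ)/2)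
          * (1 + b * (T - τ) ^ (1/p)) ^ (ℓ - 1)) := by
      intro ℓ
      split
      · exact hSr
      · exact mul_nonneg (mul_nonneg hCr (Real.rpow_pos_of_pos hMn _).le)
          (pow_nonneg (by linarith) _)
    have key : ∀ n, n ≤ N → 1 ≤ n → ∀ t ∈ Set.Icc τ T,
        f n t ≤ ENNReal.ofReal ((a + b * (T - τ) ^ (1/p) * Sr) * (M:ℝ) ^ (-(n:ℝ)/2)
          * (1 + b * (T - τ) ^ (1/p)) ^ (n - 1) * Real.exp (α * (T - t))) := by
      intro n
      induction n using Nat.strong_induction_on with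
      | _ n ih =>
        intro hnN hn1 t ht
        obtain ⟨m, rfl⟩ : ∃ m, n = m + 1 := ⟨n - 1, by omega⟩
        have het : 1 ≤ Real.exp (α * (T - t)) :=
          Real.one_le_exp (mul_nonneg hα.le (sub_nonneg.mpr ht.2))
        have hKb : ∀ ℓ, ℓ < m + 1 → ∀ s ∈ Set.Icc t T,
            f ℓ s ≤ ENNReal.ofReal ((if ℓ = 0 then Sr
              else (a + b * (T - τ) ^ (1/p) * Sr) * (M:ℝ) ^ (-(ℓ:ℝ)/2)
                * (1 + b * (T - τ) ^ (1/p)) ^ (ℓ - 1)) * Real.exp (α * (T - s))) := by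
          intro ℓ hℓ s hs
          have hsτ : s ∈ Set.Icc τ T := ⟨ht.1.trans hs.1, hs.2⟩
          rcases Nat.eq_zero_or_pos ℓ with rfl | hℓ1
          · simp only [if_pos rfl]
            refine (hf0b s hsτ).trans (ENNReal.ofReal_le_ofReal ?_)
            exact le_mul_of_one_le_right hSr
              (Real.one_le_exp (mul_nonneg hα.le (sub_nonneg.mpr hs.2)))
          · rw [if_neg (Nat.pos_iff_ne_zero.mp hℓ1)]
            exact ih ℓ hℓ (by omega) hℓ1 s hsτ
        have hI : ∀ ℓ, ℓ < m + 1 → (∫⁻ s in Set.Icc t T, (f ℓ s) ^ p) ^ (1/p)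
            ≤ ENNReal.ofReal ((if ℓ = 0 then Sr
              else (a + b * (T - τ) ^ (1/p) * Sr) * (M:ℝ) ^ (-(ℓ:ℝ)/2)
                * (1 + b * (T - τ) ^ (1/p)) ^ (ℓ - 1)) * Real.exp (α * (T - t))
              * ((M:ℝ) ^ (-(1:ℝ)/2) * (T - τ) ^ (1/p))) := by
          intro ℓ hℓ
          have h := aux_int p hp t T α _ ht.2 hα (hKnonneg ℓ) (f ℓ) (hKb ℓ hℓ)
          rwa [hpa] at h
        have hsummand_nn : ∀ ℓ : ℕ, (0:ℝ) ≤ b / (M:ℝ) ^ (((m + 1 - ℓ - 1 : ℕ):ℝ)/2)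
            * ((if ℓ = 0 then Sr
                else (a + b * (T - τ) ^ (1/p) * Sr) * (M:ℝ) ^ (-(ℓ:ℝ)/2)
                  * (1 + b * (T - τ) ^ (1/p)) ^ (ℓ - 1)) * Real.exp (α * (T - t))
               * ((M:ℝ) ^ (-(1:ℝ)/2) * (T - τ) ^ (1/p))) :=
          fun ℓ => mul_nonneg (div_nonneg hb (Real.rpow_nonneg hMn.le _))
            (mul_nonneg (mul_nonneg (hKnonneg ℓ) (Real.exp_nonneg _))
              (mul_nonneg (Real.rpow_nonneg hMn.le _) (Real.rpow_nonneg hδ.le _)))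
        calc f (m + 1) t
            ≤ ENNReal.ofReal (a / (M : ℝ) ^ (((m + 1 : ℕ) : ℝ) / 2))
              + ∑ ℓ ∈ Finset.range (m + 1),
                  ENNReal.ofReal (b / (M : ℝ) ^ (((m + 1 - ℓ - 1 : ℕ) : ℝ) / 2))
                    * (∫⁻ s in Set.Icc t T, (f ℓ s) ^ p) ^ (1 / p) :=
              hrec (m + 1) (by omega) hnN t ht
          _ ≤ ENNReal.ofReal (a / (M : ℝ) ^ (((m + 1 : ℕ) : ℝ) / 2))
              + ∑ ℓ ∈ Finset.range (m + 1),
                  ENNReal.ofReal (b / (M : ℝ) ^ (((m + 1 - ℓ - 1 : ℕ) : ℝ) / 2)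
                    * ((if ℓ = 0 then Sr
                        else (a + b * (T - τ) ^ (1/p) * Sr) * (M:ℝ) ^ (-(ℓ:ℝ)/2)
                          * (1 + b * (T - τ) ^ (1/p)) ^ (ℓ - 1)) * Real.exp (α * (T - t))
                       * ((M:ℝ) ^ (-(1:ℝ)/2) * (T - τ) ^ (1/p)))) := by
              gcongr with ℓ hℓ
              exact (mul_le_mul_right (hI ℓ (Finset.mem_range.mp hℓ)) _).trans_eq
                (ENNReal.ofReal_mul (div_nonneg hb (Real.rpow_nonneg hMn.le _))).symm
          _ = ENNReal.ofReal (a / (M : ℝ) ^ (((m + 1 : ℕ) : ℝ) / 2)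
              + ∑ ℓ ∈ Finset.range (m + 1),
                  b / (M : ℝ) ^ (((m + 1 - ℓ - 1 : ℕ) : ℝ) / 2)
                    * ((if ℓ = 0 then Sr
                        else (a + b * (T - τ) ^ (1/p) * Sr) * (M:ℝ) ^ (-(ℓ:ℝ)/2)
                          * (1 + b * (T - τ) ^ (1/p)) ^ (ℓ - 1)) * Real.exp (α * (T - t))
                       * ((M:ℝ) ^ (-(1:ℝ)/2) * (T - τ) ^ (1/p)))) := by
              rw [ENNReal.ofReal_add (div_nonneg ha (Real.rpow_nonneg hMn.le _))
                (Finset.sum_nonneg fun ℓ _ => hsummand_nn ℓ),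
                ENNReal.ofReal_sum_of_nonneg fun ℓ _ => hsummand_nn ℓ]
          _ ≤ ENNReal.ofReal ((a + b * (T - τ) ^ (1/p) * Sr) * (M:ℝ) ^ (-((m + 1 : ℕ) : ℝ)/2)
                * (1 + b * (T - τ) ^ (1/p)) ^ (m + 1 - 1) * Real.exp (α * (T - t))) := by
              apply ENNReal.ofReal_le_ofReal
              simp only [Nat.add_sub_cancel]
              exact aux_real M hM p a b Sr (T - τ) _ hp ha hb hSr hδ het m
    have hmain := key N le_rfl hN τ ⟨le_refl τ, hτ.2⟩
    have hαδ : α * (T - τ) = (M:ℝ) ^ (p/2) / p := by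
      rw [hαdef]
      field_simp
    rw [hS, ← ENNReal.ofReal_mul hβ, ← ENNReal.ofReal_add ha (mul_nonneg hβ hSr),
      ← ENNReal.ofReal_mul hCr, ← ENNReal.ofReal_mul (mul_nonneg hCr (Real.exp_nonneg _)),
      ← ENNReal.ofReal_mul (mul_nonneg (mul_nonneg hCr (Real.exp_nonneg _))
        (Real.rpow_nonneg hMn.le _))]
    refine hmain.trans (ENNReal.ofReal_le_ofReal (le_of_eq ?_))
    rw [hαδ]
    ring
end
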